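/- arXiv:1311.3134 — 5 statements merged into one kernel-verified Lean document; each statement's English description precedes it below -/
import Mathlib

section
/- Let H be a real Hilbert space (complete real inner product space). Let φ₁, φ₂ : H → EReal be proper, convex, lower semicontinuous functions whose effective domains intersect: there exists x ∈ H with both φ₁(x) and φ₂(x) finite. Then the set-sum of the ranges of the subdifferentials satisfies R(∂φ₁) + R(∂φ₂) ⊆ closure(R(∂(φ₁ + φ₂))), where R(∂φ) = {y ∈ H : ∃ x, y ∈ ∂φ(x)} and ∂(φ₁+φ₂) is the subdifferential of the pointwise sum. -/
open scoped Pointwise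

/-- The subdifferential of `φ : H → EReal` at `x`. -/
def SubDiff {H : Type*} [NormedAddCommGroup H] [InnerProductSpace ℝ H]
    (φ : H → EReal) (x : H) : Set H :=
  {y | φ x ≠ ⊤ ∧ φ x ≠ ⊥ ∧ ∀ z : H, φ x + ((inner ℝ y (z - x) : ℝ) : EReal) ≤ φ z}

/-- The range of the subdifferential of `φ`. -/
def SubDiffRange {H : Type*} [NormedAddCommGroup H] [InnerProductSpace ℝ H]
    (φ : H → EReal) : Set H :=
  {y | ∃ x : H, y ∈ SubDiff φ x}

/-- `φ` is proper: never `-∞` and finite somewhere. -/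
def ProperFun {H : Type*} (φ : H → EReal) : Prop :=
  (∀ x : H, φ x ≠ ⊥) ∧ ∃ x : H, φ x ≠ ⊤

/-- Convexity for an `EReal`-valued function. -/
def ConvexFunEReal {H : Type*} [AddCommGroup H] [Module ℝ H] (φ : H → EReal) : Prop :=
  ∀ x y : H, ∀ a b : ℝ, 0 ≤ a → 0 ≤ b → a + b = 1 →
    φ (a • x + b • y) ≤ (a : EReal) * φ x + (b : EReal) * φ y





lemma ereal_sum_ne_top {p q : EReal} (hp : p ≠ ⊥) (hq : q ≠ ⊥) (h : p + q ≠ ⊤) :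
    p ≠ ⊤ ∧ q ≠ ⊤ := by
  constructor
  · rintro rfl; exact h (EReal.top_add_of_ne_bot hq)
  · rintro rfl; exact h (EReal.add_top_of_ne_bot hp)

lemma lsc_sum {H : Type*} [TopologicalSpace H] {f g : H → EReal}
    (hf : LowerSemicontinuous f) (hg : LowerSemicontinuous g)
    (hfb : ∀ x, f x ≠ ⊥) (hgb : ∀ x, g x ≠ ⊥) :
    LowerSemicontinuous (fun x => f x + g x) := by
  intro x b hb
  obtain ⟨r, s, hr, hs, hb'⟩ : ∃ r s : ℝ, (r : EReal) < f x ∧ (s : EReal) < g x ∧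
      b ≤ ((r + s : ℝ) : EReal) := by
    have hbt : b ≠ ⊤ := hb.ne_top
    by_cases hft : f x = ⊤
    · by_cases hgt : g x = ⊤
      · exact ⟨b.toReal, 0, by simp [hft], by simp [hgt],
          by simpa using EReal.le_coe_toReal hbt⟩
      · have hg' : g x = ((g x).toReal : EReal) := (EReal.coe_toReal hgt (hgb x)).symm
        refine ⟨b.toReal - ((g x).toReal - 1), (g x).toReal - 1, by rw [hft]; exact EReal.coe_lt_top _, ?_, ?_⟩
        · rw [hg']; exact_mod_cast sub_one_lt _
        · have : b.toReal - ((g x).toReal - 1) + ((g x).toReal - 1) = b.toReal := by ring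
          rw [this]; exact EReal.le_coe_toReal hbt
    · have hf' : f x = ((f x).toReal : EReal) := (EReal.coe_toReal hft (hfb x)).symm
      by_cases hgt : g x = ⊤
      · refine ⟨(f x).toReal - 1, b.toReal - ((f x).toReal - 1), ?_, by rw [hgt]; exact EReal.coe_lt_top _, ?_⟩
        · rw [hf']; exact_mod_cast sub_one_lt _
        · have : (f x).toReal - 1 + (b.toReal - ((f x).toReal - 1)) = b.toReal := by ring
          rw [this]; exact EReal.le_coe_toReal hbt
      · have hg' : g x = ((g x).toReal : EReal) := (EReal.coe_toReal hgt (hgb x)).symm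
        by_cases hbb : b = ⊥
        · exact ⟨(f x).toReal - 1, (g x).toReal - 1,
            by rw [hf']; exact_mod_cast sub_one_lt _,
            by rw [hg']; exact_mod_cast sub_one_lt _, by simp [hbb]⟩
        · have hb2 : b = (b.toReal : EReal) := (EReal.coe_toReal hbt hbb).symm
          have hlt : b.toReal < (f x).toReal + (g x).toReal := by
            have h0 : b < f x + g x := hb
            rw [hb2, hf', hg', ← EReal.coe_add, EReal.coe_lt_coe_iff] at h0
            exact h0
          set d := ((f x).toReal + (g x).toReal - b.toReal) / 2 with hd
          have hdpos : 0 < d := by rw [hd]; linarith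
          refine ⟨(f x).toReal - d, (g x).toReal - d, ?_, ?_, ?_⟩
          · rw [hf']; exact_mod_cast sub_lt_self _ hdpos
          · rw [hg']; exact_mod_cast sub_lt_self _ hdpos
          · rw [hb2]
            apply EReal.coe_le_coe_iff.2
            rw [hd]; ring_nf; linarith
  have h1 := hf x r hr
  have h2 := hg x s hs
  filter_upwards [h1, h2] with w hw1 hw2
  calc b ≤ ((r + s : ℝ) : EReal) := hb'
    _ = (r : EReal) + (s : EReal) := EReal.coe_add r s
    _ < f w + g w := EReal.add_lt_add hw1 hw2

lemma exists_prox_min {H : Type*} [NormedAddCommGroup H] [InnerProductSpace ℝ H] [CompleteSpace H]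
    (φ : H → EReal) (hb : ∀ x, φ x ≠ ⊥)
    (hlsc : LowerSemicontinuous φ)
    (hconv : ∀ u v : H, ∀ t : ℝ, 0 ≤ t → t ≤ 1 → φ u ≠ ⊤ → φ v ≠ ⊤ →
      φ ((1-t) • u + t • v) ≤ (((1-t) * (φ u).toReal + t * (φ v).toReal : ℝ) : EReal))
    (a : H) (c : ℝ) (hc : 0 < c)
    (x₀ : H) (hx₀ : φ x₀ ≠ ⊤)
    (L : ℝ) (hL : ∀ z, (L : EReal) ≤ φ z + ((c * ‖z - a‖^2 : ℝ) : EReal)) :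
    ∃ zb : H, φ zb ≠ ⊤ ∧ ∀ w : H,
      φ zb + ((c * ‖zb - a‖^2 : ℝ) : EReal) ≤ φ w + ((c * ‖w - a‖^2 : ℝ) : EReal) := by
  set qf : H → ℝ := fun w => c * ‖w - a‖^2 with hqf
  set G : H → EReal := fun w => φ w + ((qf w : ℝ) : EReal) with hG
  have hGb : ∀ w, G w ≠ ⊥ := by
    intro w
    simp only [hG, ne_eq, EReal.add_eq_bot_iff]
    push_neg
    exact ⟨hb w, EReal.coe_ne_bot _⟩
  have hGL : ∀ w, (L : EReal) ≤ G w := hL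
  set m : EReal := ⨅ w, G w with hm
  have hmL : (L : EReal) ≤ m := le_iInf hGL
  have hmb : m ≠ ⊥ := fun h => by simp [h] at hmL
  have hGx₀ : G x₀ ≠ ⊤ := by
    simp only [hG]
    rw [← EReal.coe_toReal hx₀ (hb x₀), ← EReal.coe_add]
    exact EReal.coe_ne_top _
  have hmt : m ≠ ⊤ := fun h => hGx₀ (top_le_iff.1 (h ▸ iInf_le G x₀))
  set m' : ℝ := m.toReal with hm'
  have hmeq : m = (m' : EReal) := (EReal.coe_toReal hmt hmb).symm
  -- minimizing sequence
  have hseq : ∀ n : ℕ, ∃ z, G z < ((m' + 1/(n+1) : ℝ) : EReal) := by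
    intro n
    rw [← iInf_lt_iff, ← hm, hmeq, EReal.coe_lt_coe_iff]
    have : (0:ℝ) < 1/(n+1) := by positivity
    linarith
  choose z hz using hseq
  have hGznt : ∀ n, G (z n) ≠ ⊤ := fun n => (hz n).ne_top
  have hφznt : ∀ n, φ (z n) ≠ ⊤ := by
    intro n
    exact (ereal_sum_ne_top (hb (z n)) (EReal.coe_ne_bot _) (hGznt n)).1
  set g : ℕ → ℝ := fun n => (φ (z n)).toReal + qf (z n) with hg
  have hGeq : ∀ n, G (z n) = ((g n : ℝ) : EReal) := by
    intro n
    simp only [hG, hg]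
    rw [EReal.coe_add, EReal.coe_toReal (hφznt n) (hb (z n))]
  have hglb : ∀ n, m' ≤ g n := by
    intro n
    have : m ≤ G (z n) := iInf_le G (z n)
    rw [hmeq, hGeq n, EReal.coe_le_coe_iff] at this
    exact this
  have hgub : ∀ n, g n < m' + 1/(n+1) := by
    intro n
    have := hz n
    rw [hGeq n, EReal.coe_lt_coe_iff] at this
    exact this
  -- midpoint estimate
  have midkey : ∀ u v : H, ‖(1/2 : ℝ) • u + (1/2 : ℝ) • v - a‖^2
      = (‖u - a‖^2 + ‖v - a‖^2)/2 - ‖u - v‖^2/4 := by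
    intro u v
    have e1 : (1/2 : ℝ) • u + (1/2 : ℝ) • v - a = (1/2 : ℝ) • ((u - a) + (v - a)) := by
      module
    have e2 : u - v = (u - a) - (v - a) := by abel
    rw [e1, norm_smul]
    have h3 : ‖(u - a) + (v - a)‖^2 = ‖u-a‖^2 + 2 * inner ℝ (u-a) (v-a) + ‖v-a‖^2 :=
      norm_add_sq_real _ _
    have h4 : ‖u - v‖^2 = ‖u-a‖^2 - 2 * inner ℝ (u-a) (v-a) + ‖v-a‖^2 := by
      rw [e2]; exact norm_sub_sq_real _ _
    have h5 : ‖(1/2 : ℝ)‖ = 1/2 := by norm_num [Real.norm_eq_abs]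
    rw [h5, mul_pow]
    linarith
  have midbound : ∀ n k : ℕ, c/4 * ‖z n - z k‖^2 ≤ (g n + g k)/2 - m' := by
    intro n k
    have hmid := hconv (z n) (z k) (1/2) (by norm_num) (by norm_num) (hφznt n) (hφznt k)
    have h12 : (1 - 1/2 : ℝ) = 1/2 := by norm_num
    rw [h12] at hmid
    set w := (1/2 : ℝ) • z n + (1/2 : ℝ) • z k with hw
    have hmw : m ≤ G w := iInf_le G w
    have hGw : G w ≤ (((1/2) * (φ (z n)).toReal + (1/2) * (φ (z k)).toReal + qf w : ℝ) : EReal) := by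
      simp only [hG]
      rw [EReal.coe_add]
      exact add_le_add_left hmid _
    have : (m' : EReal) ≤ (((1/2) * (φ (z n)).toReal + (1/2) * (φ (z k)).toReal + qf w : ℝ) : EReal) :=
      le_trans (hmeq ▸ hmw) hGw
    rw [EReal.coe_le_coe_iff] at this
    have hq : qf w = (qf (z n) + qf (z k))/2 - c/4 * ‖z n - z k‖^2 := by
      simp only [hqf, hw]
      rw [midkey (z n) (z k)]
      ring
    simp only [hg]
    rw [hq] at this
    linarith
  -- Cauchy sequence
  have hcauchy : CauchySeq z := by
    rw [Metric.cauchySeq_iff']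
    intro ε hε
    obtain ⟨N, hN⟩ := exists_nat_gt (4/(c * ε^2))
    refine ⟨N, fun n hn => ?_⟩
    have h1 : c/4 * ‖z n - z N‖^2 ≤ (g n + g N)/2 - m' := midbound n N
    have h2 : g n < m' + 1/(n+1) := hgub n
    have h3 : g N < m' + 1/(N+1) := hgub N
    have h4 : (1:ℝ)/(n+1) ≤ 1/(N+1) := by
      apply one_div_le_one_div_of_le (by positivity)
      exact_mod_cast by omega
    have h5 : ‖z n - z N‖^2 < 4/c * (1/(N+1)) := by
      have hc4 : (0:ℝ) < c/4 := by positivity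
      rw [div_mul_eq_mul_div, lt_div_iff₀ hc]
      nlinarith
    have hNpos : (0:ℝ) < (N:ℝ)+1 := by positivity
    have h6 : 4/c * (1/((N:ℝ)+1)) < ε^2 := by
      rw [mul_one_div, div_div, div_lt_iff₀ (by positivity : (0:ℝ) < c * ((N:ℝ)+1))]
      have h := hN
      rw [div_lt_iff₀ (by positivity : (0:ℝ) < c * ε^2)] at h
      nlinarith
    rw [dist_eq_norm]
    have h7 : ‖z n - z N‖^2 < ε^2 := lt_trans h5 h6
    exact lt_of_pow_lt_pow_left₀ 2 hε.le h7
  -- limit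
  obtain ⟨zb, hzb⟩ := cauchySeq_tendsto_of_complete hcauchy
  have hqcont : Continuous qf := by
    simp only [hqf]
    fun_prop
  have hqz : Filter.Tendsto (fun n => qf (z n)) Filter.atTop (nhds (qf zb)) :=
    (hqcont.tendsto zb).comp hzb
  -- G zb ≤ m
  have hGzb : G zb ≤ m := by
    by_contra hcon
    push_neg at hcon
    have hkey : ((m' - qf zb : ℝ) : EReal) < φ zb := by
      by_cases hzt : φ zb = ⊤
      · rw [hzt]; exact EReal.coe_lt_top _
      · have heq : G zb = (((φ zb).toReal + qf zb : ℝ) : EReal) := by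
          simp only [hG]
          rw [EReal.coe_add, EReal.coe_toReal hzt (hb zb)]
        rw [hmeq, heq, EReal.coe_lt_coe_iff] at hcon
        rw [← EReal.coe_toReal hzt (hb zb), EReal.coe_lt_coe_iff]
        linarith
    obtain ⟨bb, hbb1, hbb2⟩ := EReal.lt_iff_exists_real_btwn.1 hkey
    rw [EReal.coe_lt_coe_iff] at hbb1
    set δ : ℝ := (bb - (m' - qf zb))/2 with hδ
    have hδpos : 0 < δ := by rw [hδ]; linarith
    have ev1 : ∀ᶠ n in Filter.atTop, (bb : EReal) < φ (z n) :=
      hzb.eventually (hlsc zb bb hbb2)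
    have ev2 : ∀ᶠ n in Filter.atTop, qf zb - δ < qf (z n) :=
      hqz.eventually (eventually_gt_nhds (by linarith))
    have ev3 : ∀ᶠ n : ℕ in Filter.atTop, (1:ℝ)/((n:ℝ)+1) < δ := by
      have ht : Filter.Tendsto (fun n : ℕ => 1/((n:ℝ)+1)) Filter.atTop (nhds 0) :=
        tendsto_one_div_add_atTop_nhds_zero_nat
      exact ht.eventually (eventually_lt_nhds hδpos)
    obtain ⟨n, h1, h2, h3⟩ := (ev1.and (ev2.and ev3)).exists
    have hp : bb < (φ (z n)).toReal := by
      rw [← EReal.coe_toReal (hφznt n) (hb (z n)), EReal.coe_lt_coe_iff] at h1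
      exact h1
    have : m' + δ < g n := by
      simp only [hg]
      have : bb = m' - qf zb + 2*δ := by rw [hδ]; ring
      nlinarith
    have := hgub n
    linarith
  have hφzbt : φ zb ≠ ⊤ := by
    intro h
    apply hmt
    rw [← top_le_iff]
    refine le_trans ?_ hGzb
    simp only [hG, h]
    rw [EReal.top_add_of_ne_bot (EReal.coe_ne_bot _)]
  exact ⟨zb, hφzbt, fun w => le_trans hGzb (iInf_le G w)⟩

set_option maxHeartbeats 2000000

theorem brezis_haraux_closure_inclusion
    {H : Type*} [NormedAddCommGroup H] [InnerProductSpace ℝ H] [CompleteSpace H]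
    (φ₁ φ₂ : H → EReal)
    (h₁p : ProperFun φ₁) (h₂p : ProperFun φ₂)
    (h₁c : ConvexFunEReal φ₁) (h₂c : ConvexFunEReal φ₂)
    (h₁l : LowerSemicontinuous φ₁) (h₂l : LowerSemicontinuous φ₂)
    (hdom : ∃ x : H, φ₁ x ≠ ⊤ ∧ φ₁ x ≠ ⊥ ∧ φ₂ x ≠ ⊤ ∧ φ₂ x ≠ ⊥) :
    SubDiffRange φ₁ + SubDiffRange φ₂ ⊆
      closure (SubDiffRange (fun x => φ₁ x + φ₂ x)) := by
  set φ : H → EReal := fun z => φ₁ z + φ₂ z with hφ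
  have hφb : ∀ z, φ z ≠ ⊥ := by
    intro z
    simp only [hφ, ne_eq, EReal.add_eq_bot_iff]
    push_neg
    exact ⟨h₁p.1 z, h₂p.1 z⟩
  have hφlsc : LowerSemicontinuous φ := lsc_sum h₁l h₂l h₁p.1 h₂p.1
  have hconv : ∀ u v : H, ∀ t : ℝ, 0 ≤ t → t ≤ 1 → φ u ≠ ⊤ → φ v ≠ ⊤ →
      φ ((1-t) • u + t • v) ≤ (((1-t) * (φ u).toReal + t * (φ v).toReal : ℝ) : EReal) := by
    intro u v t ht0 ht1 hut hvt
    obtain ⟨hu1, hu2⟩ := ereal_sum_ne_top (h₁p.1 u) (h₂p.1 u) hut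
    obtain ⟨hv1, hv2⟩ := ereal_sum_ne_top (h₁p.1 v) (h₂p.1 v) hvt
    have hc1 := h₁c u v (1-t) t (by linarith) ht0 (by ring)
    have hc2 := h₂c u v (1-t) t (by linarith) ht0 (by ring)
    rw [← EReal.coe_toReal hu1 (h₁p.1 u), ← EReal.coe_toReal hv1 (h₁p.1 v),
      ← EReal.coe_mul, ← EReal.coe_mul, ← EReal.coe_add] at hc1
    rw [← EReal.coe_toReal hu2 (h₂p.1 u), ← EReal.coe_toReal hv2 (h₂p.1 v),
      ← EReal.coe_mul, ← EReal.coe_mul, ← EReal.coe_add] at hc2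
    have hsum := add_le_add hc1 hc2
    rw [← EReal.coe_add] at hsum
    refine le_trans hsum (EReal.coe_le_coe_iff.2 ?_)
    have e1 : (φ u).toReal = (φ₁ u).toReal + (φ₂ u).toReal :=
      EReal.toReal_add hu1 (h₁p.1 u) hu2 (h₂p.1 u)
    have e2 : (φ v).toReal = (φ₁ v).toReal + (φ₂ v).toReal :=
      EReal.toReal_add hv1 (h₁p.1 v) hv2 (h₂p.1 v)
    rw [e1, e2]; ring_nf; exact le_refl _
  intro y hy
  rw [Set.mem_add] at hy
  obtain ⟨y₁, hy₁, y₂, hy₂, rfl⟩ := hy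
  obtain ⟨x₁, h₁t, h₁b, hsub₁⟩ := hy₁
  obtain ⟨x₂, h₂t, h₂b, hsub₂⟩ := hy₂
  obtain ⟨x₀, hx₀1t, hx₀1b, hx₀2t, hx₀2b⟩ := hdom
  set y : H := y₁ + y₂ with hy
  have hφx₀t : φ x₀ ≠ ⊤ := by
    simp only [hφ]
    rw [← EReal.coe_toReal hx₀1t hx₀1b, ← EReal.coe_toReal hx₀2t hx₀2b, ← EReal.coe_add]
    exact EReal.coe_ne_top _
  set K : ℝ := (φ₁ x₁).toReal + (φ₂ x₂).toReal - inner ℝ y₁ x₁ - inner ℝ y₂ x₂ with hK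
  have hlow : ∀ z, ((K + inner ℝ y z : ℝ) : EReal) ≤ φ z := by
    intro z
    have h1 := hsub₁ z
    have h2 := hsub₂ z
    have hsum := add_le_add h1 h2
    rw [← EReal.coe_toReal h₁t h₁b, ← EReal.coe_toReal h₂t h₂b,
      ← EReal.coe_add, ← EReal.coe_add, ← EReal.coe_add] at hsum
    refine le_trans (le_of_eq ?_) hsum
    rw [EReal.coe_eq_coe_iff]
    simp only [hK, hy, inner_sub_right, inner_add_left]
    ring
  set p₀ : ℝ := (φ x₀).toReal with hp₀
  set D : ℝ := p₀ - K - inner ℝ y x₀ with hD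
  have hD0 : 0 ≤ D := by
    have := hlow x₀
    rw [← EReal.coe_toReal hφx₀t (hφb x₀), EReal.coe_le_coe_iff] at this
    simp only [hD]
    linarith
  rw [Metric.mem_closure_iff]
  intro ε hε
  set c : ℝ := ε^2/(8*(D+1)) with hc
  have hcpos : 0 < c := by
    apply div_pos (by positivity) (by linarith)
  set s : ℝ := 1/(2*c) with hs
  set a : H := x₀ + s • y with ha
  set L : ℝ := K + inner ℝ y a - ‖y‖^2/(4*c) with hL
  have hLbound : ∀ z, (L : EReal) ≤ φ z + ((c * ‖z - a‖^2 : ℝ) : EReal) := by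
    intro z
    have h1 := hlow z
    have h2 : ((K + inner ℝ y z + c * ‖z - a‖^2 : ℝ) : EReal) ≤ φ z + ((c * ‖z - a‖^2 : ℝ) : EReal) := by
      rw [EReal.coe_add]
      exact add_le_add_left h1 _
    refine le_trans (EReal.coe_le_coe_iff.2 ?_) h2
    have hiz : (inner ℝ y z : ℝ) = inner ℝ y a + inner ℝ y (z - a) := by
      rw [inner_sub_right]; ring
    have habs : -(‖y‖ * ‖z - a‖) ≤ (inner ℝ y (z - a) : ℝ) := by
      have := abs_real_inner_le_norm y (z - a)
      rw [abs_le] at this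
      exact neg_le_of_neg_le (by linarith [this.1])
    have h4c : ‖y‖^2/(4*c) * (4*c) = ‖y‖^2 := by field_simp
    simp only [hL]
    rw [hiz]
    nlinarith [sq_nonneg (2*c*‖z - a‖ - ‖y‖), norm_nonneg (z - a), hcpos]
  obtain ⟨zb, hzbt, hmin⟩ := exists_prox_min φ hφb hφlsc hconv a c hcpos x₀ hφx₀t L hLbound
  set w : H := (2*c) • (a - zb) with hw
  set p : ℝ := (φ zb).toReal with hp
  -- G zb ≤ G x₀ in the reals
  have hGzx : p + c * ‖zb - a‖^2 ≤ p₀ + c * ‖x₀ - a‖^2 := by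
    have := hmin x₀
    rw [← EReal.coe_toReal hzbt (hφb zb), ← EReal.coe_toReal hφx₀t (hφb x₀),
      ← EReal.coe_add, ← EReal.coe_add, EReal.coe_le_coe_iff] at this
    exact this
  -- key bound: c ‖zb - x₀‖² ≤ D
  set u : H := zb - x₀ with hu
  have hcs : c * (2*s) = 1 := by
    simp only [hs]; field_simp
  have hzba : zb - a = u - s • y := by simp only [ha, hu]; abel
  have hx₀a : x₀ - a = -(s • y) := by simp only [ha]; abel
  have hn1 : ‖zb - a‖^2 = ‖u‖^2 - 2*s*(inner ℝ u y) + s^2*‖y‖^2 := by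
    rw [hzba, norm_sub_sq_real, real_inner_smul_right, norm_smul]
    simp [Real.norm_eq_abs, mul_pow, sq_abs]
    ring
  have hn2 : ‖x₀ - a‖^2 = s^2*‖y‖^2 := by
    rw [hx₀a, norm_neg, norm_smul]
    simp [Real.norm_eq_abs, mul_pow, sq_abs]
  have hiu : (inner ℝ y zb : ℝ) = inner ℝ y x₀ + inner ℝ y u := by
    simp only [hu, inner_sub_right]; ring
  have hlowzb : K + inner ℝ y zb ≤ p := by
    have := hlow zb
    rw [← EReal.coe_toReal hzbt (hφb zb), EReal.coe_le_coe_iff] at this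
    exact this
  have hkey : c * ‖u‖^2 ≤ D := by
    have hcomm : (inner ℝ u y : ℝ) = inner ℝ y u := real_inner_comm y u
    simp only [hD]
    rw [hn1, hn2] at hGzx
    have hx : c * (2*s) * (inner ℝ u y : ℝ) = inner ℝ u y := by rw [hcs]; ring
    nlinarith [hGzx, hlowzb, hiu, hx, hcomm]
  -- w is a subgradient of φ at zb
  have hwsub : w ∈ SubDiff φ zb := by
    refine ⟨hzbt, hφb zb, ?_⟩
    intro v
    by_cases hvt : φ v = ⊤
    · rw [hvt]; exact le_top
    set r : ℝ := (φ v).toReal with hr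
    set d : H := v - zb with hd
    have key : ∀ t : ℝ, 0 < t → t ≤ 1 →
        p ≤ r + 2*c*(inner ℝ (zb - a) d : ℝ) + c*t*‖d‖^2 := by
      intro t ht0 ht1
      have h1 := hmin ((1-t) • zb + t • v)
      have h2 := hconv zb v t ht0.le ht1 hzbt hvt
      have h3 : φ ((1-t) • zb + t • v) + ((c * ‖(1-t) • zb + t • v - a‖^2 : ℝ) : EReal)
          ≤ (((1-t)*p + t*r + c * ‖(1-t) • zb + t • v - a‖^2 : ℝ) : EReal) := by
        rw [EReal.coe_add]
        exact add_le_add_left h2 _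
      have h4 := le_trans h1 h3
      rw [← EReal.coe_toReal hzbt (hφb zb), ← EReal.coe_add, EReal.coe_le_coe_iff] at h4
      have e : (1-t) • zb + t • v - a = (zb - a) + t • d := by
        simp only [hd]; module
      have hnorm : ‖(1-t) • zb + t • v - a‖^2
          = ‖zb - a‖^2 + 2*t*(inner ℝ (zb - a) d : ℝ) + t^2*‖d‖^2 := by
        rw [e, norm_add_sq_real, real_inner_smul_right, norm_smul]
        simp [Real.norm_eq_abs, mul_pow, sq_abs]
        ring
      rw [hnorm] at h4
      have h5 : t*p ≤ t*r + 2*c*t*(inner ℝ (zb - a) d : ℝ) + c*t^2*‖d‖^2 := by nlinarith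
      have h6 : t*(r + 2*c*(inner ℝ (zb - a) d : ℝ) + c*t*‖d‖^2) =
          t*r + 2*c*t*(inner ℝ (zb - a) d : ℝ) + c*t^2*‖d‖^2 := by ring
      have h7 : t*p ≤ t*(r + 2*c*(inner ℝ (zb - a) d : ℝ) + c*t*‖d‖^2) := by
        rw [h6]; exact h5
      exact le_of_mul_le_mul_left h7 ht0
    have hlim : p ≤ r + 2*c*(inner ℝ (zb - a) d : ℝ) := by
      by_contra hcon
      push_neg at hcon
      set β : ℝ := p - r - 2*c*(inner ℝ (zb - a) d : ℝ) with hβ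
      have hβpos : 0 < β := by simp only [hβ]; linarith
      set t : ℝ := min 1 (β/(2*(c*‖d‖^2+1))) with ht
      have hden : (0:ℝ) < 2*(c*‖d‖^2+1) := by positivity
      have ht0 : 0 < t := lt_min one_pos (div_pos hβpos hden)
      have ht1 : t ≤ 1 := min_le_left _ _
      have htβ : t ≤ β/(2*(c*‖d‖^2+1)) := min_le_right _ _
      have hk := key t ht0 ht1
      have hsmall : c*t*‖d‖^2 < β := by
        have h7 : c*t*‖d‖^2 ≤ (c*‖d‖^2) * (β/(2*(c*‖d‖^2+1))) := by
          have hcd : 0 ≤ c*‖d‖^2 := by positivity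
          calc c*t*‖d‖^2 = (c*‖d‖^2)*t := by ring
            _ ≤ (c*‖d‖^2) * (β/(2*(c*‖d‖^2+1))) := by
                exact mul_le_mul_of_nonneg_left htβ hcd
        have h8 : (c*‖d‖^2) * (β/(2*(c*‖d‖^2+1))) < β := by
          rw [mul_div_assoc', div_lt_iff₀ hden]
          nlinarith [hβpos, sq_nonneg ‖d‖, hcpos]
        linarith
      simp only [hβ] at hsmall
      linarith
    have hinner : (inner ℝ w (v - zb) : ℝ) = -(2*c*(inner ℝ (zb - a) d : ℝ)) := by
      simp only [hw, hd]
      rw [real_inner_smul_left]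
      have : a - zb = -(zb - a) := by abel
      rw [this, inner_neg_left]
      ring
    calc φ zb + ((inner ℝ w (v - zb) : ℝ) : EReal)
        = (((p + inner ℝ w (v - zb) : ℝ)) : EReal) := by
          rw [EReal.coe_add, ← EReal.coe_toReal hzbt (hφb zb)]
      _ ≤ ((r : ℝ) : EReal) := by
          rw [EReal.coe_le_coe_iff, hinner]
          linarith
      _ = φ v := EReal.coe_toReal hvt (hφb v)
  refine ⟨w, ⟨zb, hwsub⟩, ?_⟩
  -- distance estimate
  have h2c : (2*c) * s = 1 := by simp only [hs]; field_simp
  have hwy : w = (2*c) • (x₀ - zb) + y := by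
    have e0 : w = (2*c) • (x₀ - zb) + ((2*c)*s) • y := by
      simp only [hw, ha]; module
    rw [e0, h2c, one_smul]
  have hdist : dist y w = 2*c*‖u‖ := by
    rw [dist_eq_norm, hwy]
    have e1 : y - ((2*c) • (x₀ - zb) + y) = (2*c) • (zb - x₀) := by module
    rw [e1, norm_smul, Real.norm_eq_abs, abs_of_pos (by linarith : (0:ℝ) < 2*c)]
  rw [hdist]
  have hfin : (2*c*‖u‖)^2 ≤ 4*c*D := by
    have : (2*c*‖u‖)^2 = 4*c*(c*‖u‖^2) := by ring
    rw [this]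
    nlinarith [hkey, hcpos]
  have hlt : 4*c*D < ε^2 := by
    have h1 : c * (8*(D+1)) = ε^2 := by
      simp only [hc]; field_simp
    nlinarith [mul_nonneg hcpos.le hD0, hcpos, hD0]
  have : (2*c*‖u‖)^2 < ε^2 := lt_of_le_of_lt hfin hlt
  exact lt_of_pow_lt_pow_left₀ 2 hε.le this
end

section
/- Let H be a real Hilbert space (complete real inner product space). Let φ₁, φ₂ : H → EReal be proper, convex, lower semicontinuous functions whose effective domains intersect: there exists x ∈ H with both φ₁(x) and φ₂(x) finite. Then interior(R(∂φ₁) + R(∂φ₂)) ⊆ interior(R(∂(φ₁ + φ₂))), where R(∂φ) = {y ∈ H : ∃ x, y ∈ ∂φ(x)}, the sum of two subsets of H is the Minkowski sum, and interiors are taken in the norm topology of H. -/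
open scoped Pointwise
open RealInnerProductSpace

section Aux
variable {H : Type*} [NormedAddCommGroup H] [InnerProductSpace ℝ H]

lemma affine_minorant (φ₁ φ₂ : H → EReal) {w : H}
    (hw : w ∈ SubDiffRange φ₁ + SubDiffRange φ₂) :
    ∃ C : ℝ, ∀ x : H, ((⟪w, x⟫ - C : ℝ) : EReal) ≤ φ₁ x + φ₂ x := by
  obtain ⟨w₁, hw₁, w₂, hw₂, rfl⟩ := hw
  obtain ⟨x₁, hne₁, hnb₁, h1⟩ := hw₁
  obtain ⟨x₂, hne₂, hnb₂, h2⟩ := hw₂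
  refine ⟨⟪w₁, x₁⟫ + ⟪w₂, x₂⟫ - (φ₁ x₁).toReal - (φ₂ x₂).toReal, fun x => ?_⟩
  have e1 : φ₁ x₁ = (((φ₁ x₁).toReal : ℝ) : EReal) := (EReal.coe_toReal hne₁ hnb₁).symm
  have e2 : φ₂ x₂ = (((φ₂ x₂).toReal : ℝ) : EReal) := (EReal.coe_toReal hne₂ hnb₂).symm
  have key : ((⟪w₁ + w₂, x⟫ - (⟪w₁, x₁⟫ + ⟪w₂, x₂⟫ - (φ₁ x₁).toReal - (φ₂ x₂).toReal) : ℝ) : EReal)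
      = (φ₁ x₁ + ((⟪w₁, x - x₁⟫ : ℝ) : EReal)) + (φ₂ x₂ + ((⟪w₂, x - x₂⟫ : ℝ) : EReal)) := by
    rw [e1, e2, ← EReal.coe_add, ← EReal.coe_add, ← EReal.coe_add]
    congr 1
    simp only [inner_add_left, inner_sub_right, EReal.toReal_coe]
    ring
  rw [key]
  exact add_le_add (h1 x) (h2 x)

lemma bounded_of_inner_bounded [CompleteSpace H] {C : Set H}
    (h : ∀ u : H, ∃ M : ℝ, ∀ x ∈ C, ⟪x, u⟫ ≤ M) :
    ∃ R : ℝ, ∀ x ∈ C, ‖x‖ ≤ R := by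
  have hpt : ∀ u : H, ∃ M : ℝ, ∀ i : C, ‖(innerSL ℝ (i : H)) u‖ ≤ M := by
    intro u
    obtain ⟨M₁, h₁⟩ := h u
    obtain ⟨M₂, h₂⟩ := h (-u)
    refine ⟨max M₁ M₂, fun i => ?_⟩
    rw [Real.norm_eq_abs, abs_le]
    constructor
    · have := h₂ i i.2
      rw [inner_neg_right] at this
      simp only [innerSL_apply_apply]
      nlinarith [le_max_right M₁ M₂]
    · exact le_trans (h₁ i i.2) (le_max_left M₁ M₂)
  obtain ⟨R, hR⟩ := banach_steinhaus hpt
  exact ⟨R, fun x hx => by simpa [innerSL_apply_norm] using hR ⟨x, hx⟩⟩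

lemma nested_inter [CompleteSpace H] {C : ℕ → Set H}
    (hne : ∀ n, (C n).Nonempty) (hcl : ∀ n, IsClosed (C n))
    (hcv : ∀ n, Convex ℝ (C n)) (hmono : ∀ m n, m ≤ n → C n ⊆ C m)
    {R : ℝ} (hbd : ∀ x ∈ C 0, ‖x‖ ≤ R) :
    (⋂ n, C n).Nonempty := by
  have hproj : ∀ n, ∃ p ∈ C n, ‖p‖ = ⨅ w : C n, ‖(w : H)‖ := by
    intro n
    obtain ⟨p, hp, hnorm⟩ := exists_norm_eq_iInf_of_complete_convex (hne n)
      ((hcl n).isComplete) (hcv n) 0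
    refine ⟨p, hp, ?_⟩
    simpa [norm_sub_rev] using hnorm
  choose p hpmem hpnorm using hproj
  set d : ℕ → ℝ := fun n => ⨅ w : C n, ‖(w : H)‖ with hd
  have hbdd : ∀ n, BddBelow (Set.range fun w : C n => ‖(w : H)‖) :=
    fun n => ⟨0, by rintro r ⟨w, rfl⟩; exact norm_nonneg _⟩
  have hdle : ∀ n, ∀ z ∈ C n, d n ≤ ‖z‖ := by
    intro n z hz
    exact ciInf_le (hbdd n) ⟨z, hz⟩
  have hdmono : Monotone d := by
    intro m n hmn
    have := hdle m (p n) (hmono m n hmn (hpmem n))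
    rwa [hpnorm n] at this
  have hdboundR : ∀ n, d n ≤ R := fun n =>
    le_trans (hdle n (p n) (hpmem n)) (hbd (p n) (hmono 0 n (Nat.zero_le n) (hpmem n)))
  have hdnn : ∀ n, 0 ≤ d n := fun n => by
    have := (hne n).to_subtype
    exact le_ciInf fun w => norm_nonneg _
  set D : ℝ := ⨆ n, d n with hD
  have hdD : Filter.Tendsto d Filter.atTop (nhds D) :=
    tendsto_atTop_ciSup hdmono ⟨R, by rintro r ⟨n, rfl⟩; exact hdboundR n⟩
  have hdleD : ∀ n, d n ≤ D := fun n =>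
    le_ciSup ⟨R, by rintro r ⟨k, rfl⟩; exact hdboundR k⟩ n
  have hkey : ∀ m n, m ≤ n → ‖p n - p m‖ ^ 2 ≤ 2 * (D ^ 2 - d m ^ 2) := by
    intro m n hmn
    have hmid : (1 / 2 : ℝ) • (p n + p m) ∈ C m := by
      have h1 : p n ∈ C m := hmono m n hmn (hpmem n)
      have := (hcv m) h1 (hpmem m) (by norm_num : (0:ℝ) ≤ 1/2)
        (by norm_num : (0:ℝ) ≤ 1/2) (by norm_num)
      simpa [smul_add] using this
    have hmidnorm : d m ≤ ‖(1 / 2 : ℝ) • (p n + p m)‖ := hdle m _ hmid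
    have hsum : 2 * d m ≤ ‖p n + p m‖ := by
      have : ‖(1 / 2 : ℝ) • (p n + p m)‖ = (1/2) * ‖p n + p m‖ := by
        rw [norm_smul]; simp
      rw [this] at hmidnorm; linarith
    have hpar : ‖p n + p m‖ ^ 2 + ‖p n - p m‖ ^ 2 = 2 * (‖p n‖ ^ 2 + ‖p m‖ ^ 2) := by
      have := parallelogram_law_with_norm ℝ (p n) (p m)
      nlinarith [this]
    have h1 : ‖p n‖ = d n := hpnorm n
    have h2 : ‖p m‖ = d m := hpnorm m
    have h3 : (2 * d m) ^ 2 ≤ ‖p n + p m‖ ^ 2 := by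
      have h0 : (0:ℝ) ≤ 2 * d m := by linarith [hdnn m]
      nlinarith [norm_nonneg (p n + p m)]
    have h4 : d n ≤ D := hdleD n
    nlinarith [hdnn n, hdnn m, hdleD m]
  have hDd : Filter.Tendsto (fun m => Real.sqrt (2 * (D ^ 2 - d m ^ 2))) Filter.atTop (nhds 0) := by
    have h1 : Filter.Tendsto (fun m => 2 * (D ^ 2 - d m ^ 2)) Filter.atTop (nhds 0) := by
      have h2 : Filter.Tendsto (fun m => D ^ 2 - d m ^ 2) Filter.atTop (nhds (D^2 - D^2)) :=
        Filter.Tendsto.sub tendsto_const_nhds ((hdD.pow 2))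
      simpa using h2.const_mul 2
    have h2 := (Real.continuous_sqrt.tendsto 0).comp h1
    rw [Real.sqrt_zero] at h2
    exact h2
  have hcauchy : CauchySeq p := by
    apply cauchySeq_of_le_tendsto_0 (fun m => Real.sqrt (2 * (D ^ 2 - d m ^ 2))) _ hDd
    intro n m N hn hm
    have key : ∀ a b : ℕ, N ≤ a → a ≤ b → dist (p b) (p a) ≤ Real.sqrt (2 * (D ^ 2 - d N ^ 2)) := by
      intro a b hNa hab
      rw [dist_eq_norm, ← Real.sqrt_sq (norm_nonneg (p b - p a))]
      apply Real.sqrt_le_sqrt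
      have h1 := hkey a b hab
      have h2 : d N ≤ d a := hdmono hNa
      nlinarith [hdnn N, hdnn a]
    rcases le_total n m with hnm | hmn
    · rw [dist_comm]; exact key n m hn hnm
    · exact key m n hm hmn
  obtain ⟨q, hq⟩ := cauchySeq_tendsto_of_complete hcauchy
  refine ⟨q, Set.mem_iInter.2 fun n => ?_⟩
  apply (hcl n).mem_of_tendsto hq
  filter_upwards [Filter.eventually_ge_atTop n] with k hk
  exact hmono n k hk (hpmem k)

end Aux

theorem brezis_haraux_interior_inclusion
    {H : Type*} [NormedAddCommGroup H] [InnerProductSpace ℝ H] [CompleteSpace H]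
    (φ₁ φ₂ : H → EReal)
    (h₁p : ProperFun φ₁) (h₂p : ProperFun φ₂)
    (h₁c : ConvexFunEReal φ₁) (h₂c : ConvexFunEReal φ₂)
    (h₁l : LowerSemicontinuous φ₁) (h₂l : LowerSemicontinuous φ₂)
    (hdom : ∃ x : H, φ₁ x ≠ ⊤ ∧ φ₁ x ≠ ⊥ ∧ φ₂ x ≠ ⊤ ∧ φ₂ x ≠ ⊥) :
    interior (SubDiffRange φ₁ + SubDiffRange φ₂) ⊆
      interior (SubDiffRange (fun x => φ₁ x + φ₂ x)) := by
  have hψbot : ∀ x : H, φ₁ x + φ₂ x ≠ ⊥ := fun x => by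
    simp [EReal.add_eq_bot_iff, h₁p.1 x, h₂p.1 x]
  obtain ⟨x₀, hx₀1t, hx₀1b, hx₀2t, hx₀2b⟩ := hdom
  have hψx₀ : φ₁ x₀ + φ₂ x₀ ≠ ⊤ := (EReal.add_lt_top hx₀1t hx₀2t).ne
  have hψl : LowerSemicontinuous (fun x => φ₁ x + φ₂ x) := by
    apply h₁l.add' h₂l
    intro x
    exact EReal.continuousAt_add (Or.inr (h₂p.1 x)) (Or.inl (h₁p.1 x))
  apply interior_maximal _ isOpen_interior
  intro y hy
  obtain ⟨ε, hε, hball⟩ := Metric.isOpen_iff.1 isOpen_interior y hy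
  have hball' : Metric.ball y ε ⊆ SubDiffRange φ₁ + SubDiffRange φ₂ :=
    hball.trans interior_subset
  set g : H → EReal := fun x => (φ₁ x + φ₂ x) + ((-⟪y, x⟫ : ℝ) : EReal) with hgdef
  have hgbot : ∀ x, g x ≠ ⊥ := fun x => by
    simp [hgdef, EReal.add_eq_bot_iff, h₁p.1 x, h₂p.1 x]
  have hgl : LowerSemicontinuous g := by
    apply hψl.add'
    · exact (continuous_coe_real_ereal.comp
        ((continuous_const.inner continuous_id).neg)).lowerSemicontinuous
    · intro x
      exact EReal.continuousAt_add (Or.inr (by simp)) (Or.inr (by simp))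
  obtain ⟨C₀, hC₀⟩ := affine_minorant φ₁ φ₂ (hball' (Metric.mem_ball_self hε))
  have hglb : ∀ x, ((-C₀ : ℝ) : EReal) ≤ g x := by
    intro x
    have h := add_le_add (hC₀ x) (le_refl ((-⟪y, x⟫ : ℝ) : EReal))
    rw [← EReal.coe_add] at h
    have : (⟪y, x⟫ - C₀ + -⟪y, x⟫ : ℝ) = -C₀ := by ring
    rw [this] at h
    exact h
  set m : EReal := ⨅ x, g x with hm
  have hmbot : m ≠ ⊥ := by
    have h : ((-C₀ : ℝ) : EReal) ≤ m := le_iInf hglb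
    intro hb; rw [hb, le_bot_iff] at h; exact (EReal.coe_ne_bot _) h
  have hmtop : m ≠ ⊤ := by
    have h1 : m ≤ g x₀ := iInf_le _ x₀
    have h2 : g x₀ ≠ ⊤ := (EReal.add_lt_top hψx₀ (by simp)).ne
    intro h; rw [h, top_le_iff] at h1; exact h2 h1
  set μ : ℝ := m.toReal with hμ
  have hmμ : m = (μ : EReal) := (EReal.coe_toReal hmtop hmbot).symm
  -- finiteness on sublevel sets
  have hfin : ∀ x : H, g x ≠ ⊤ → (φ₁ x ≠ ⊤ ∧ φ₂ x ≠ ⊤) := by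
    intro x hx
    constructor
    · intro h1
      apply hx
      simp only [hgdef, h1, EReal.top_add_of_ne_bot (h₂p.1 x),
        EReal.top_add_of_ne_bot (by simp : ((-⟪y, x⟫ : ℝ) : EReal) ≠ ⊥)]
    · intro h2
      apply hx
      simp only [hgdef, h2]
      rw [add_comm (φ₁ x) ⊤, EReal.top_add_of_ne_bot (h₁p.1 x),
        EReal.top_add_of_ne_bot (by simp : ((-⟪y, x⟫ : ℝ) : EReal) ≠ ⊥)]
  have hgval : ∀ x : H, g x ≠ ⊤ →
      g x = (((φ₁ x).toReal + (φ₂ x).toReal - ⟪y, x⟫ : ℝ) : EReal) := by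
    intro x hx
    obtain ⟨h1, h2⟩ := hfin x hx
    rw [hgdef]
    simp only
    rw [← EReal.coe_toReal h1 (h₁p.1 x), ← EReal.coe_toReal h2 (h₂p.1 x),
      ← EReal.coe_add, ← EReal.coe_add]
    norm_num
    rw [sub_eq_add_neg]
  set c : ℕ → ℝ := fun n => 1 / (n + 1) with hc
  have hcpos : ∀ n, 0 < c n := fun n => by positivity
  set Cs : ℕ → Set H := fun n => {x | g x ≤ ((μ + c n : ℝ) : EReal)} with hCs
  have hnotop : ∀ n, ∀ x ∈ Cs n, g x ≠ ⊤ := by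
    intro n x hx h
    have hx' : g x ≤ ((μ + c n : ℝ) : EReal) := hx
    rw [h, top_le_iff] at hx'
    exact (EReal.coe_ne_top _) hx'
  have hne : ∀ n, (Cs n).Nonempty := by
    intro n
    have hlt : (⨅ x, g x) < ((μ + c n : ℝ) : EReal) := by
      rw [← hm, hmμ]
      exact_mod_cast (by linarith [hcpos n] : μ < μ + c n)
    obtain ⟨x, hx⟩ := iInf_lt_iff.1 hlt
    exact ⟨x, hx.le⟩
  have hclosed : ∀ n, IsClosed (Cs n) := fun n => hgl.isClosed_preimage _
  have hconv : ∀ n, Convex ℝ (Cs n) := by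
    intro n x1 hx1 x2 hx2 a b ha hb hab
    have hx1' : g x1 ≤ ((μ + c n : ℝ) : EReal) := hx1
    have hx2' : g x2 ≤ ((μ + c n : ℝ) : EReal) := hx2
    have h1top := hnotop n x1 hx1
    have h2top := hnotop n x2 hx2
    have e1 := hgval x1 h1top
    have e2 := hgval x2 h2top
    rw [e1, EReal.coe_le_coe_iff] at hx1'
    rw [e2, EReal.coe_le_coe_iff] at hx2'
    have hφ1 := h₁c x1 x2 a b ha hb hab
    have hφ2 := h₂c x1 x2 a b ha hb hab
    rw [← EReal.coe_toReal (hfin x1 h1top).1 (h₁p.1 x1),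
      ← EReal.coe_toReal (hfin x2 h2top).1 (h₁p.1 x2),
      ← EReal.coe_mul, ← EReal.coe_mul, ← EReal.coe_add] at hφ1
    rw [← EReal.coe_toReal (hfin x1 h1top).2 (h₂p.1 x1),
      ← EReal.coe_toReal (hfin x2 h2top).2 (h₂p.1 x2),
      ← EReal.coe_mul, ← EReal.coe_mul, ← EReal.coe_add] at hφ2
    have hin : ⟪y, a • x1 + b • x2⟫ = a * ⟪y, x1⟫ + b * ⟪y, x2⟫ := by
      simp [inner_add_right, real_inner_smul_right]
    show g (a • x1 + b • x2) ≤ ((μ + c n : ℝ) : EReal)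
    have step : g (a • x1 + b • x2) ≤
        ((a * (φ₁ x1).toReal + b * (φ₁ x2).toReal
          + (a * (φ₂ x1).toReal + b * (φ₂ x2).toReal)
          + -⟪y, a • x1 + b • x2⟫ : ℝ) : EReal) := by
      rw [EReal.coe_add, EReal.coe_add]
      exact add_le_add (add_le_add hφ1 hφ2) le_rfl
    refine le_trans step ?_
    rw [EReal.coe_le_coe_iff, hin]
    have hsum : a * (μ + c n) + b * (μ + c n) = μ + c n := by
      rw [← add_mul, hab, one_mul]
    have A1 := mul_le_mul_of_nonneg_left hx1' ha
    have A2 := mul_le_mul_of_nonneg_left hx2' hb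
    nlinarith [A1, A2, hsum]
  have hmono : ∀ a b : ℕ, a ≤ b → Cs b ⊆ Cs a := by
    intro a b hab x hx
    have hx' : g x ≤ ((μ + c b : ℝ) : EReal) := hx
    refine le_trans hx' ?_
    rw [EReal.coe_le_coe_iff]
    have : c b ≤ c a := by
      apply one_div_le_one_div_of_le (by positivity)
      have : (a : ℝ) ≤ b := by exact_mod_cast hab
      linarith
    linarith
  have hc0 : c 0 = 1 := by norm_num [hc]
  have hbd : ∃ R, ∀ x ∈ Cs 0, ‖x‖ ≤ R := by
    apply bounded_of_inner_bounded
    intro u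
    by_cases hu : u = 0
    · exact ⟨0, fun x _ => by simp [hu]⟩
    set k : ℝ := ε / (2 * (‖u‖ + 1)) with hk
    have hupos : 0 < ‖u‖ := norm_pos_iff.2 hu
    have hkpos : 0 < k := by positivity
    have hv : y + k • u ∈ Metric.ball y ε := by
      rw [Metric.mem_ball, dist_eq_norm]
      have : y + k • u - y = k • u := by abel
      rw [this, norm_smul, Real.norm_eq_abs, abs_of_pos hkpos, hk]
      rw [div_mul_eq_mul_div, div_lt_iff₀ (by positivity)]
      nlinarith
    obtain ⟨Cv, hCv⟩ := affine_minorant φ₁ φ₂ (hball' hv)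
    refine ⟨(Cv + μ + 1) / k, fun x hx => ?_⟩
    have hxtop := hnotop 0 x hx
    have hx' : g x ≤ ((μ + c 0 : ℝ) : EReal) := hx
    rw [hgval x hxtop, EReal.coe_le_coe_iff, hc0] at hx'
    have hmin := hCv x
    rw [← EReal.coe_toReal (hfin x hxtop).1 (h₁p.1 x),
      ← EReal.coe_toReal (hfin x hxtop).2 (h₂p.1 x), ← EReal.coe_add,
      EReal.coe_le_coe_iff] at hmin
    have hinv : ⟪y + k • u, x⟫ = ⟪y, x⟫ + k * ⟪u, x⟫ := by
      simp [inner_add_left, real_inner_smul_left]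
    rw [hinv] at hmin
    rw [real_inner_comm u x, le_div_iff₀ hkpos]
    nlinarith
  obtain ⟨R, hR⟩ := hbd
  obtain ⟨q, hq⟩ := nested_inter hne hclosed hconv hmono hR
  have hqn : ∀ n, g q ≤ ((μ + c n : ℝ) : EReal) := fun n => Set.mem_iInter.1 hq n
  have hqtop : g q ≠ ⊤ := hnotop 0 q (Set.mem_iInter.1 hq 0)
  have eqq := hgval q hqtop
  set ρ : ℝ := (φ₁ q).toReal + (φ₂ q).toReal - ⟪y, q⟫ with hρ
  have hρμ : ρ ≤ μ := by
    by_contra hlt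
    push_neg at hlt
    obtain ⟨n, hn⟩ := exists_nat_one_div_lt (by linarith : (0:ℝ) < ρ - μ)
    have h := hqn n
    rw [eqq, EReal.coe_le_coe_iff] at h
    have hcn : c n = 1 / (n + 1) := rfl
    rw [← hcn] at hn
    linarith
  have hgq_le : ∀ z, g q ≤ g z := by
    intro z
    refine le_trans ?_ (iInf_le _ z)
    rw [← hm, hmμ, eqq, EReal.coe_le_coe_iff]
    exact hρμ
  refine ⟨q, ?_, hψbot q, ?_⟩
  · exact (EReal.add_lt_top (hfin q hqtop).1 (hfin q hqtop).2).ne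
  · intro z
    show φ₁ q + φ₂ q + ((inner ℝ y (z - q) : ℝ) : EReal) ≤ φ₁ z + φ₂ z
    by_cases hz : φ₁ z + φ₂ z = ⊤
    · rw [hz]; exact le_top
    · have hz' : g z ≠ ⊤ :=
        (EReal.add_lt_top hz (EReal.coe_ne_top _)).ne
      have ez := hgval z hz'
      have hineq := hgq_le z
      rw [eqq, ez, EReal.coe_le_coe_iff] at hineq
      rw [← EReal.coe_toReal (hfin q hqtop).1 (h₁p.1 q),
        ← EReal.coe_toReal (hfin q hqtop).2 (h₂p.1 q),
        ← EReal.coe_toReal (hfin z hz').1 (h₁p.1 z),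
        ← EReal.coe_toReal (hfin z hz').2 (h₂p.1 z),
        ← EReal.coe_add, ← EReal.coe_add, ← EReal.coe_add,
        EReal.coe_le_coe_iff]
      have : (inner ℝ y (z - q) : ℝ) = ⟪y, z⟫ - ⟪y, q⟫ := by
        rw [inner_sub_right]
      rw [this]
      linarith
end

section
/- Let H be a real Hilbert space and let φ₁, φ₂ : H → EReal be proper, convex, lower semicontinuous functions with intersecting effective domains. Suppose that the subdifferential of the sum equals the sum of the subdifferentials, i.e., for every x ∈ H, ∂(φ₁+φ₂)(x) = {y₁ + y₂ : y₁ ∈ ∂φ₁(x), y₂ ∈ ∂φ₂(x)}. Then R(∂(φ₁+φ₂)) and R(∂φ₁) + R(∂φ₂) are almost equal: they have the same closure and the same interior in H. -/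
open scoped Pointwise
open Filter Topology

section Helpers
set_option linter.unusedSectionVars false
variable {H : Type*} [NormedAddCommGroup H] [InnerProductSpace ℝ H]

lemma ereal_combo_le {e : EReal} {r₁ r₂ a b : ℝ} (h₁ : (r₁ : EReal) ≤ e) (h₂ : (r₂ : EReal) ≤ e)
    (ha : 0 ≤ a) (hb : 0 ≤ b) (hab : a + b = 1) : ((a * r₁ + b * r₂ : ℝ) : EReal) ≤ e := by
  rcases le_total r₁ r₂ with h | h
  · refine le_trans ?_ h₂
    rw [EReal.coe_le_coe_iff]
    have h3 := mul_le_mul_of_nonneg_left h ha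
    have h4 : a * r₂ + b * r₂ = r₂ := by rw [← add_mul, hab, one_mul]
    linarith
  · refine le_trans ?_ h₁
    rw [EReal.coe_le_coe_iff]
    have h3 := mul_le_mul_of_nonneg_left h hb
    have h4 : a * r₁ + b * r₁ = r₁ := by rw [← add_mul, hab, one_mul]
    linarith

lemma ereal_mul_add_coe {a c : ℝ} (ha : 0 ≤ a) {e : EReal} (he : e ≠ ⊥) :
    (a : EReal) * (e + (c : ℝ)) = (a : EReal) * e + ((a * c : ℝ) : EReal) := by
  rcases eq_or_lt_of_le ha with rfl | ha'
  · simp [EReal.zero_mul]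
  induction e with
  | bot => exact absurd rfl he
  | coe r => rw [← EReal.coe_add, ← EReal.coe_mul, ← EReal.coe_mul, ← EReal.coe_add, mul_add]
  | top =>
    rw [EReal.top_add_coe, EReal.coe_mul_top_of_pos ha', EReal.top_add_coe]

lemma lsc_add_ereal {f g : H → EReal} (hf : LowerSemicontinuous f) (hg : LowerSemicontinuous g)
    (hfb : ∀ x, f x ≠ ⊥) (hgb : ∀ x, g x ≠ ⊥) :
    LowerSemicontinuous fun x => f x + g x := by
  intro x y hy
  rcases eq_or_ne y ⊥ with rfl | hyb
  · filter_upwards with z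
    exact bot_lt_iff_ne_bot.2 fun h => (EReal.add_eq_bot_iff.1 h).elim (hfb z) (hgb z)
  have hyt : y ≠ ⊤ := ne_top_of_lt hy
  lift y to ℝ using ⟨hyt, hyb⟩
  obtain ⟨u, v, hu, hv, huv⟩ : ∃ u v : ℝ, (u : EReal) < f x ∧ (v : EReal) < g x ∧ y < u + v := by
    rcases eq_or_ne (f x) ⊤ with hfx | hfx
    · obtain ⟨v, hv1, hv2⟩ := EReal.exists_between_coe_real (bot_lt_iff_ne_bot.2 (hgb x))
      exact ⟨y - v + 1, v, hfx ▸ EReal.coe_lt_top _, hv2, by linarith⟩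
    rcases eq_or_ne (g x) ⊤ with hgx | hgx
    · obtain ⟨u, hu1, hu2⟩ := EReal.exists_between_coe_real (bot_lt_iff_ne_bot.2 (hfb x))
      exact ⟨u, y - u + 1, hu2, hgx ▸ EReal.coe_lt_top _, by linarith⟩
    lift f x to ℝ using ⟨hfx, hfb x⟩ with a ha
    lift g x to ℝ using ⟨hgx, hgb x⟩ with b hb
    have hab : y < a + b := by exact_mod_cast hy
    refine ⟨a - (a + b - y)/3, b - (a + b - y)/3, ?_, ?_, by linarith⟩
    · exact_mod_cast by linarith
    · exact_mod_cast by linarith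
  filter_upwards [hf x u hu, hg x v hv] with z h1 h2
  calc (y : EReal) < ((u + v : ℝ) : EReal) := by exact_mod_cast huv
  _ = (u : EReal) + (v : EReal) := EReal.coe_add u v
  _ < f z + g z := EReal.add_lt_add h1 h2

lemma isClosed_epi {Φ : H → EReal} (h : LowerSemicontinuous Φ) :
    IsClosed {pt : H × ℝ | Φ pt.1 ≤ (pt.2 : EReal)} := by
  rw [← isOpen_compl_iff, isOpen_iff_mem_nhds]
  rintro ⟨z, t⟩ ht
  simp only [Set.mem_compl_iff, Set.mem_setOf_eq, not_le] at ht
  obtain ⟨c, hc1, hc2⟩ := EReal.exists_between_coe_real ht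
  have h1 : ∀ᶠ z' in 𝓝 z, (c : EReal) < Φ z' := h z _ hc2
  have h2 : ∀ᶠ t' in 𝓝 t, t' < c := eventually_lt_nhds (by exact_mod_cast hc1)
  rw [nhds_prod_eq]
  filter_upwards [h1.prod_mk h2] with pt hp
  simp only [Set.mem_compl_iff, Set.mem_setOf_eq, not_le]
  exact lt_trans (by exact_mod_cast hp.2) hp.1

end Helpers

section Main
set_option linter.unusedSectionVars false
open Metric
variable {H : Type*} [NormedAddCommGroup H] [InnerProductSpace ℝ H]

local notation "⟪" x ", " y "⟫" => (inner ℝ x y : ℝ)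

/-- The set of affine minorants (slope, constant) of `Φ`. -/
def MinoPairs (Φ : H → EReal) : Set (H × ℝ) :=
  {pt | ∀ x : H, ((⟪pt.1, x⟫ - pt.2 : ℝ) : EReal) ≤ Φ x}

lemma isClosed_coe_le (e : EReal) : IsClosed {r : ℝ | (r : EReal) ≤ e} := by
  induction e with
  | bot => simp only [le_bot_iff, EReal.coe_ne_bot]; exact isClosed_empty
  | coe c =>
    have : {r : ℝ | (r : EReal) ≤ (c : EReal)} = Set.Iic c := by
      ext r; simp [EReal.coe_le_coe_iff]
    rw [this]; exact isClosed_Iic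
  | top => simp only [le_top]; exact isClosed_univ

lemma convex_minoPairs (Φ : H → EReal) : Convex ℝ (MinoPairs Φ) := by
  rintro ⟨p₁, t₁⟩ h₁ ⟨p₂, t₂⟩ h₂ a b ha hb hab
  intro x
  show (((inner ℝ (a • p₁ + b • p₂) x : ℝ) - (a * t₁ + b * t₂) : ℝ) : EReal) ≤ Φ x
  have key : ((inner ℝ (a • p₁ + b • p₂) x : ℝ) - (a * t₁ + b * t₂))
      = a * ((inner ℝ p₁ x : ℝ) - t₁) + b * ((inner ℝ p₂ x : ℝ) - t₂) := by
    rw [inner_add_left, real_inner_smul_left, real_inner_smul_left]; ring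
  rw [key]
  exact ereal_combo_le (h₁ x) (h₂ x) ha hb hab

lemma convex_epi {Φ : H → EReal} (hc : ConvexFunEReal Φ) :
    Convex ℝ {pt : H × ℝ | Φ pt.1 ≤ (pt.2 : EReal)} := by
  rintro ⟨z₁, t₁⟩ h₁ ⟨z₂, t₂⟩ h₂ a b ha hb hab
  simp only [Set.mem_setOf_eq] at h₁ h₂ ⊢
  calc Φ (a • z₁ + b • z₂) ≤ (a : EReal) * Φ z₁ + (b : EReal) * Φ z₂ := hc z₁ z₂ a b ha hb hab
  _ ≤ (a : EReal) * (t₁ : EReal) + (b : EReal) * (t₂ : EReal) := by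
      exact add_le_add (mul_le_mul_of_nonneg_left h₁ (by exact_mod_cast ha))
        (mul_le_mul_of_nonneg_left h₂ (by exact_mod_cast hb))
  _ = ((a * t₁ + b * t₂ : ℝ) : EReal) := by rw [← EReal.coe_mul, ← EReal.coe_mul, EReal.coe_add]

lemma fenchel_key [CompleteSpace H] {Φ : H → EReal}
    (hbot : ∀ x, Φ x ≠ ⊥) (hc : ConvexFunEReal Φ) (hl : LowerSemicontinuous Φ)
    (x₀ : H) (hx₀ : Φ x₀ ≠ ⊤)
    (hE : (MinoPairs Φ).Nonempty) (w : H) (r : ℝ)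
    (hyp : ∀ pt ∈ MinoPairs Φ, (inner ℝ pt.1 w : ℝ) - pt.2 ≤ r) :
    Φ w ≤ (r : EReal) := by
  by_contra hgt
  push_neg at hgt
  have hnot : (w, r) ∉ {pt : H × ℝ | Φ pt.1 ≤ (pt.2 : EReal)} := by
    simp only [Set.mem_setOf_eq, not_le]; exact hgt
  obtain ⟨f, u, hfa, hfx⟩ := geometric_hahn_banach_closed_point
    (convex_epi hc) (isClosed_epi hl) hnot
  set s : ℝ := f (0, 1) with hs
  set v : H := (InnerProductSpace.toDual ℝ H).symm (f.comp (ContinuousLinearMap.inl ℝ H ℝ)) with hv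
  have hvg : ∀ z : H, (inner ℝ v z : ℝ) = f (z, 0) := fun z => by
    rw [hv, InnerProductSpace.toDual_symm_apply]; rfl
  have hfzt : ∀ (z : H) (t : ℝ), f (z, t) = (inner ℝ v z : ℝ) + t * s := by
    intro z t
    have : (z, t) = (z, 0) + t • ((0 : H), (1 : ℝ)) := by
      simp [Prod.ext_iff]
    rw [this, f.map_add, f.map_smul, hvg]
    simp [hs, smul_eq_mul]
  have hmem : ∀ (z : H) (t : ℝ), Φ z ≤ (t : EReal) → (inner ℝ v z : ℝ) + t * s < u := by
    intro z t hzt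
    have := hfa (z, t) hzt
    rwa [hfzt] at this
  -- s ≤ 0
  have hT : Φ x₀ ≤ ((Φ x₀).toReal : EReal) := by
    rw [EReal.coe_toReal hx₀ (hbot x₀)]
  have hsle : s ≤ 0 := by
    by_contra hpos
    push_neg at hpos
    set T : ℝ := (Φ x₀).toReal
    have ht' : ∀ t : ℝ, T ≤ t → (inner ℝ v x₀ : ℝ) + t * s < u := by
      intro t ht
      exact hmem x₀ t (le_trans hT (by exact_mod_cast ht))
    have h1 := ht' (max T ((u - (inner ℝ v x₀ : ℝ)) / s)) (le_max_left _ _)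
    have h2 : (u - (inner ℝ v x₀ : ℝ)) / s ≤ max T ((u - (inner ℝ v x₀ : ℝ)) / s) := le_max_right _ _
    rw [div_le_iff₀ hpos] at h2
    linarith
  rcases lt_or_eq_of_le hsle with hslt | hszero
  · -- s < 0 : produce an affine minorant and contradict hyp
    set β : ℝ := -s with hβ
    have hβpos : 0 < β := by simp [hβ]; linarith
    set p : H := β⁻¹ • v with hp
    have hpz : ∀ z : H, (inner ℝ p z : ℝ) = (inner ℝ v z : ℝ) / β := fun z => by
      rw [hp, real_inner_smul_left]; ring
    have hmino : (p, u / β) ∈ MinoPairs Φ := by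
      intro x
      rcases eq_or_ne (Φ x) ⊤ with hx | hx
      · rw [hx]; exact le_top
      have hxr : ((Φ x).toReal : EReal) = Φ x := EReal.coe_toReal hx (hbot x)
      have h' := hmem x ((Φ x).toReal) (by rw [hxr])
      rw [← hxr, EReal.coe_le_coe_iff]
      show (inner ℝ p x : ℝ) - u / β ≤ (Φ x).toReal
      rw [hpz, div_sub_div_same, div_le_iff₀ hβpos, hβ]
      linarith
    have hcontra := hyp _ hmino
    simp only at hcontra
    rw [hpz] at hcontra
    have hfxval : u < (inner ℝ v w : ℝ) + r * s := by rw [← hfzt]; exact hfx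
    rw [div_sub_div_same, div_le_iff₀ hβpos, hβ] at hcontra
    linarith
  · -- s = 0
    obtain ⟨⟨p₀, t₀⟩, hp₀⟩ := hE
    have hvlt : ∀ z : H, Φ z ≠ ⊤ → (inner ℝ v z : ℝ) < u := by
      intro z hz
      have := hmem z ((Φ z).toReal) (by rw [EReal.coe_toReal hz (hbot z)])
      rw [hszero] at this; rw [mul_zero] at this
      linarith
    have hwgt : u < (inner ℝ v w : ℝ) := by
      have := hfx
      rw [hfzt, hszero, mul_zero] at this
      linarith
    set d : ℝ := (inner ℝ v w : ℝ) - u with hd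
    have hdpos : 0 < d := by simp [hd]; linarith
    set lam : ℝ := max 1 ((r + t₀ - (inner ℝ p₀ w : ℝ) + 1) / d) with hlam
    have hlampos : 0 < lam := lt_of_lt_of_le one_pos (le_max_left _ _)
    have hmino : (p₀ + lam • v, t₀ + lam * u) ∈ MinoPairs Φ := by
      intro x
      rcases eq_or_ne (Φ x) ⊤ with hx | hx
      · rw [hx]; exact le_top
      have h1 := hp₀ x
      have h2 := hvlt x hx
      simp only [Prod.fst, Prod.snd] at h1 ⊢
      refine le_trans ?_ h1
      rw [EReal.coe_le_coe_iff, inner_add_left, real_inner_smul_left]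
      nlinarith [mul_pos hlampos (sub_pos.2 h2)]
    have hcontra := hyp _ hmino
    simp only [Prod.fst, Prod.snd, inner_add_left, real_inner_smul_left] at hcontra
    have hlamd : (r + t₀ - (inner ℝ p₀ w : ℝ) + 1) ≤ lam * d := by
      have h1 : ((r + t₀ - (inner ℝ p₀ w : ℝ) + 1) / d) * d ≤ lam * d :=
        mul_le_mul_of_nonneg_right (le_max_right _ _) hdpos.le
      rw [div_mul_cancel₀ _ hdpos.ne'] at h1
      exact h1
    rw [hd] at hlamd
    nlinarith

lemma core_exists_subgrad [CompleteSpace H] {Φ : H → EReal}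
    (hbot : ∀ x, Φ x ≠ ⊥) (hc : ConvexFunEReal Φ) (hl : LowerSemicontinuous Φ)
    (x₀ : H) (hx₀ : Φ x₀ ≠ ⊤) (y : H) (ρ M : ℝ) (hρ : 0 < ρ)
    (hball : ∀ p ∈ Metric.ball y ρ, ∀ x : H, (((inner ℝ p x : ℝ) - M : ℝ) : EReal) ≤ Φ x) :
    ∃ xb : H, y ∈ SubDiff Φ xb := by
  classical
  have hEconv : Convex ℝ (MinoPairs Φ) := convex_minoPairs Φ
  have hbox : ∀ p ∈ Metric.ball y ρ, ∀ t : ℝ, M ≤ t → (p, t) ∈ MinoPairs Φ := by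
    intro p hp t ht x
    refine le_trans ?_ (hball p hp x)
    exact EReal.coe_le_coe_iff.2 (by linarith)
  have hint : ∀ p ∈ Metric.ball y ρ, ∀ t : ℝ, M < t → (p, t) ∈ interior (MinoPairs Φ) := by
    intro p hp t ht
    have hU : IsOpen ((Metric.ball y ρ) ×ˢ (Set.Ioi M)) := Metric.isOpen_ball.prod isOpen_Ioi
    have hUE : (Metric.ball y ρ) ×ˢ (Set.Ioi M) ⊆ MinoPairs Φ := by
      rintro ⟨p', t'⟩ ⟨hp', ht'⟩
      exact hbox p' hp' t' (le_of_lt ht')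
    exact interior_maximal hUE hU ⟨hp, ht⟩
  -- the infimum of the tilted function
  set m : EReal := ⨅ x : H, (Φ x + ((-(inner ℝ y x : ℝ) : ℝ) : EReal)) with hm
  have key_shift : ∀ (x : H) (t : ℝ), (((inner ℝ y x : ℝ) - t : ℝ) : EReal) ≤ Φ x →
      ((-t : ℝ) : EReal) ≤ Φ x + ((-(inner ℝ y x : ℝ) : ℝ) : EReal) := by
    intro x t h
    have heq : (-t : ℝ) = ((inner ℝ y x : ℝ) - t) + (-(inner ℝ y x : ℝ)) := by ring
    calc ((-t : ℝ) : EReal) = (((inner ℝ y x : ℝ) - t : ℝ) : EReal)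
          + ((-(inner ℝ y x : ℝ) : ℝ) : EReal) := by rw [heq, EReal.coe_add]
    _ ≤ _ := add_le_add_left h _
  have hmlb : ((-M : ℝ) : EReal) ≤ m := by
    refine le_iInf fun x => key_shift x M (hbox y (Metric.mem_ball_self hρ) M le_rfl x)
  have hmub : m ≤ Φ x₀ + ((-(inner ℝ y x₀ : ℝ) : ℝ) : EReal) := iInf_le _ x₀
  have hmtop : m ≠ ⊤ := by
    intro h
    rw [h, top_le_iff] at hmub
    exact (EReal.add_lt_top hx₀ (EReal.coe_ne_top _)).ne hmub
  have hmbot : m ≠ ⊥ := fun h => EReal.coe_ne_bot (-M) (le_bot_iff.1 (h ▸ hmlb))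
  set mr : ℝ := m.toReal with hmrdef
  have hmr : (mr : EReal) = m := EReal.coe_toReal hmtop hmbot
  -- the boundary point is not interior
  have hq₀ : (y, -mr) ∉ interior (MinoPairs Φ) := by
    intro hmem
    obtain ⟨ε, hε, hballsub⟩ := Metric.isOpen_iff.1 isOpen_interior _ hmem
    have hq : (y, -mr - ε/2) ∈ MinoPairs Φ := by
      apply interior_subset
      apply hballsub
      rw [Metric.mem_ball, Prod.dist_eq]
      have h1 : dist y y = 0 := dist_self y
      have h2 : dist (-mr - ε/2) (-mr) = ε/2 := by
        rw [Real.dist_eq, show -mr - ε/2 - -mr = -(ε/2) by ring, abs_neg,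
          abs_of_nonneg (by positivity)]
      rw [h1, h2]
      exact max_lt hε (by linarith)
    have : ((mr + ε/2 : ℝ) : EReal) ≤ m := by
      refine le_iInf fun x => ?_
      have := key_shift x (-mr - ε/2) (hq x)
      convert this using 2
      ring
    rw [← hmr] at this
    have := EReal.coe_le_coe_iff.1 this
    linarith
  obtain ⟨f, hf⟩ := geometric_hahn_banach_open_point hEconv.interior isOpen_interior hq₀
  set s : ℝ := f (0, 1) with hs
  set v : H := (InnerProductSpace.toDual ℝ H).symm (f.comp (ContinuousLinearMap.inl ℝ H ℝ)) with hv
  have hvg : ∀ z : H, (inner ℝ v z : ℝ) = f (z, 0) := fun z => by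
    rw [hv, InnerProductSpace.toDual_symm_apply]; rfl
  have hfzt : ∀ (z : H) (t : ℝ), f (z, t) = (inner ℝ v z : ℝ) + t * s := by
    intro z t
    have : (z, t) = (z, 0) + t • ((0 : H), (1 : ℝ)) := by simp [Prod.ext_iff]
    rw [this, f.map_add, f.map_smul, hvg]
    simp [hs, smul_eq_mul]
  have hw₀ : ((y, M + 1) : H × ℝ) ∈ interior (MinoPairs Φ) :=
    hint y (Metric.mem_ball_self hρ) (M+1) (by linarith)
  have hyt : ∀ t : ℝ, M < t → (inner ℝ v y : ℝ) + t * s < (inner ℝ v y : ℝ) + (-mr) * s := by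
    intro t ht
    have := hf _ (hint y (Metric.mem_ball_self hρ) t ht)
    rwa [hfzt, hfzt] at this
  have hsneg : s < 0 := by
    rcases lt_trichotomy s 0 with h | h | h
    · exact h
    · exfalso
      have := hyt (M + 1) (by linarith)
      rw [h] at this
      simp at this
    · exfalso
      have h1 := hyt (max (M + 1) (-mr + 1)) (lt_of_lt_of_le (by linarith) (le_max_left _ _))
      have h2 : (-mr + 1) ≤ max (M + 1) (-mr + 1) := le_max_right _ _
      have h3 : max (M + 1) (-mr + 1) * s < (-mr) * s := by linarith
      have h4 := (mul_lt_mul_iff_left₀ h).1 (by linarith [h3] : max (M + 1) (-mr + 1) * s < (-mr) * s)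
      linarith
  -- every point of MinoPairs satisfies f pt ≤ f (y, -mr)
  have hflee : ∀ pt ∈ MinoPairs Φ, f pt ≤ f ((y, -mr) : H × ℝ) := by
    intro pt hpt
    by_contra hlt
    push_neg at hlt
    set D : ℝ := f pt - f ((y, -mr) : H × ℝ) with hD
    have hDpos : 0 < D := by simp [hD]; linarith
    set c : ℝ := f ((y, M+1) : H × ℝ) - f pt with hcdef
    set θ : ℝ := min 1 (D / (2 * (|c| + 1))) with hθ
    have hθpos : 0 < θ := lt_min one_pos (by positivity)
    have hθ1 : θ ≤ 1 := min_le_left _ _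
    have hcombo := hEconv.combo_interior_self_mem_interior hw₀ hpt hθpos
      (by linarith : (0:ℝ) ≤ 1 - θ) (by ring)
    have hfc := hf _ hcombo
    have hfcval : f (θ • ((y, M+1) : H × ℝ) + (1 - θ) • pt) = θ * f ((y, M+1) : H × ℝ)
        + (1 - θ) * f pt := by
      rw [f.map_add, f.map_smul, f.map_smul]; simp [smul_eq_mul]
    rw [hfcval] at hfc
    have h1 : θ * (|c| + 1) ≤ D / 2 := by
      calc θ * (|c| + 1) ≤ (D / (2 * (|c| + 1))) * (|c| + 1) :=
            mul_le_mul_of_nonneg_right (min_le_right _ _) (by positivity)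
      _ = D / 2 := by field_simp
    have h2 : θ * (-(|c|)) ≤ θ * c := mul_le_mul_of_nonneg_left (neg_abs_le c) hθpos.le
    nlinarith [abs_nonneg c]
  set β : ℝ := -s with hβ
  have hβpos : 0 < β := by simp [hβ]; linarith
  set xb : H := β⁻¹ • v with hxb
  have hxbz : ∀ z : H, (inner ℝ xb z : ℝ) = (inner ℝ v z : ℝ) / β := fun z => by
    rw [hxb, real_inner_smul_left]; ring
  have hyp' : ∀ pt ∈ MinoPairs Φ, (inner ℝ pt.1 xb : ℝ) - pt.2 ≤ (inner ℝ xb y : ℝ) + mr := by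
    rintro ⟨p, t⟩ hpt
    have h1 := hflee _ hpt
    rw [hfzt, hfzt] at h1
    have h2 : (inner ℝ v p : ℝ) - β * t ≤ (inner ℝ v y : ℝ) + β * mr := by
      rw [hβ]; linarith
    show (inner ℝ p xb : ℝ) - t ≤ (inner ℝ xb y : ℝ) + mr
    rw [← real_inner_comm p xb, hxbz, hxbz]
    have e1 : (inner ℝ v p : ℝ) / β * β = (inner ℝ v p : ℝ) := div_mul_cancel₀ _ hβpos.ne'
    have e2 : (inner ℝ v y : ℝ) / β * β = (inner ℝ v y : ℝ) := div_mul_cancel₀ _ hβpos.ne'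
    nlinarith [h2, e1, e2, hβpos]
  have hE0 : (MinoPairs Φ).Nonempty := ⟨(y, M), hbox y (Metric.mem_ball_self hρ) M le_rfl⟩
  have hΦxb : Φ xb ≤ (((inner ℝ xb y : ℝ) + mr : ℝ) : EReal) :=
    fenchel_key hbot hc hl x₀ hx₀ hE0 xb ((inner ℝ xb y : ℝ) + mr) hyp'
  have hnetop : Φ xb ≠ ⊤ := fun h => by rw [h] at hΦxb; exact EReal.coe_ne_top _ (top_le_iff.1 hΦxb)
  refine ⟨xb, hnetop, hbot xb, fun z => ?_⟩
  set A : ℝ := (Φ xb).toReal with hAdef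
  have hA : (A : EReal) = Φ xb := EReal.coe_toReal hnetop (hbot xb)
  have hAle : A ≤ (inner ℝ xb y : ℝ) + mr := by
    rw [← hA] at hΦxb
    exact EReal.coe_le_coe_iff.1 hΦxb
  have hmz : ((mr + (inner ℝ y z : ℝ) : ℝ) : EReal) ≤ Φ z := by
    have h1 : (mr : EReal) ≤ Φ z + ((-(inner ℝ y z : ℝ) : ℝ) : EReal) := hmr ▸ iInf_le _ z
    calc ((mr + (inner ℝ y z : ℝ) : ℝ) : EReal)
        ≤ (Φ z + ((-(inner ℝ y z : ℝ) : ℝ) : EReal)) + (((inner ℝ y z : ℝ) : ℝ) : EReal) := by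
          rw [EReal.coe_add]
          exact add_le_add_left h1 _
    _ = Φ z + ((((-(inner ℝ y z : ℝ)) + (inner ℝ y z : ℝ) : ℝ)) : EReal) := by
          rw [add_assoc, EReal.coe_add]
    _ = Φ z := by norm_num
  rw [← hA]
  calc ((A : ℝ) : EReal) + (((inner ℝ y (z - xb) : ℝ) : ℝ) : EReal)
      = ((A + (inner ℝ y (z - xb) : ℝ) : ℝ) : EReal) := by rw [EReal.coe_add]
  _ ≤ ((mr + (inner ℝ y z : ℝ) : ℝ) : EReal) := by
      rw [EReal.coe_le_coe_iff, inner_sub_right]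
      have : (inner ℝ xb y : ℝ) = (inner ℝ y xb : ℝ) := (real_inner_comm xb y).symm
      linarith
  _ ≤ Φ z := hmz

lemma ereal_mul_add' {a : ℝ} (ha : 0 ≤ a) {e₁ e₂ : EReal} (h₁ : e₁ ≠ ⊥) (h₂ : e₂ ≠ ⊥) :
    (a : EReal) * (e₁ + e₂) = (a : EReal) * e₁ + (a : EReal) * e₂ := by
  rcases eq_or_lt_of_le ha with rfl | ha'
  · simp [EReal.zero_mul]
  have hmulbot : ∀ e : EReal, e ≠ ⊥ → (a : EReal) * e ≠ ⊥ := by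
    intro e he
    induction e with
    | bot => exact absurd rfl he
    | coe r => rw [← EReal.coe_mul]; exact EReal.coe_ne_bot _
    | top => rw [EReal.coe_mul_top_of_pos ha']; exact (by simp : (⊤ : EReal) ≠ ⊥)
  have htop : ∀ e : EReal, e ≠ ⊥ → (a : EReal) * (⊤ + e) = (a : EReal) * ⊤ + (a : EReal) * e := by
    intro e he
    rw [EReal.top_add_of_ne_bot he, EReal.coe_mul_top_of_pos ha',
      EReal.top_add_of_ne_bot (hmulbot e he)]
  induction e₁ with
  | bot => exact absurd rfl h₁
  | coe r₁ =>
    induction e₂ with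
    | bot => exact absurd rfl h₂
    | coe r₂ => rw [← EReal.coe_add, ← EReal.coe_mul, ← EReal.coe_mul, ← EReal.coe_mul,
        ← EReal.coe_add, mul_add]
    | top =>
      rw [add_comm, htop _ (EReal.coe_ne_bot r₁), add_comm]
  | top => exact htop _ h₂

lemma convex_add_ereal {f g : H → EReal} (hf : ConvexFunEReal f) (hg : ConvexFunEReal g)
    (hfb : ∀ x, f x ≠ ⊥) (hgb : ∀ x, g x ≠ ⊥) :
    ConvexFunEReal (fun x => f x + g x) := by
  intro x y a b ha hb hab
  calc f (a • x + b • y) + g (a • x + b • y)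
      ≤ ((a : EReal) * f x + (b : EReal) * f y) + ((a : EReal) * g x + (b : EReal) * g y) :=
        add_le_add (hf x y a b ha hb hab) (hg x y a b ha hb hab)
  _ = ((a : EReal) * f x + (a : EReal) * g x) + ((b : EReal) * f y + (b : EReal) * g y) := by
        abel
  _ = (a : EReal) * (f x + g x) + (b : EReal) * (f y + g y) := by
        rw [ereal_mul_add' ha (hfb x) (hgb x), ereal_mul_add' hb (hfb y) (hgb y)]

lemma quad_combo (x y : H) (a b : ℝ) (ha : 0 ≤ a) (hb : 0 ≤ b) (hab : a + b = 1) :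
    ‖a • x + b • y‖^2 ≤ a * ‖x‖^2 + b * ‖y‖^2 := by
  have h1 : ‖a • x + b • y‖ ≤ a * ‖x‖ + b * ‖y‖ := by
    calc ‖a • x + b • y‖ ≤ ‖a • x‖ + ‖b • y‖ := norm_add_le _ _
    _ = a * ‖x‖ + b * ‖y‖ := by rw [norm_smul, norm_smul, Real.norm_eq_abs, Real.norm_eq_abs,
        abs_of_nonneg ha, abs_of_nonneg hb]
  have h2 : (0:ℝ) ≤ ‖a • x + b • y‖ := norm_nonneg _
  have key : (a * ‖x‖ + b * ‖y‖)^2 ≤ a * ‖x‖^2 + b * ‖y‖^2 := by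
    nlinarith [sq_nonneg (‖x‖ - ‖y‖), mul_nonneg ha hb]
  nlinarith [mul_self_le_mul_self h2 h1]

lemma le_of_forall_pos_le_add' {a b c : ℝ} (hc : 0 ≤ c)
    (h : ∀ t : ℝ, 0 < t → t ≤ 1 → a ≤ b + t * c) : a ≤ b := by
  by_contra hab
  push_neg at hab
  have hd : 0 < a - b := by linarith
  have ht := h (min 1 ((a - b)/(2*(c+1)))) (lt_min one_pos (by positivity)) (min_le_left _ _)
  have h1 : (min 1 ((a - b)/(2*(c+1)))) * c ≤ ((a - b)/(2*(c+1))) * c :=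
    mul_le_mul_of_nonneg_right (min_le_right _ _) hc
  have h2 : ((a - b)/(2*(c+1))) * c ≤ (a - b)/2 := by
    rw [div_mul_eq_mul_div, div_le_div_iff₀ (by positivity) two_pos]
    nlinarith
  linarith

lemma subdiffrange_mino {φ : H → EReal} {y : H} (hy : y ∈ SubDiffRange φ) :
    ∃ C : ℝ, ∀ x : H, (((inner ℝ y x : ℝ) - C : ℝ) : EReal) ≤ φ x := by
  obtain ⟨x₀, ht, hb, hsub⟩ := hy
  refine ⟨(inner ℝ y x₀ : ℝ) - (φ x₀).toReal, fun x => ?_⟩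
  have hA : (((φ x₀).toReal : ℝ) : EReal) = φ x₀ := EReal.coe_toReal ht hb
  have heq : ((inner ℝ y x : ℝ) - ((inner ℝ y x₀ : ℝ) - (φ x₀).toReal) : ℝ)
      = (φ x₀).toReal + (inner ℝ y (x - x₀) : ℝ) := by
    rw [inner_sub_right]; ring
  calc (((inner ℝ y x : ℝ) - ((inner ℝ y x₀ : ℝ) - (φ x₀).toReal) : ℝ) : EReal)
      = (((φ x₀).toReal : ℝ) : EReal) + (((inner ℝ y (x - x₀) : ℝ) : ℝ) : EReal) := by
        rw [heq, EReal.coe_add]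
  _ = φ x₀ + ((inner ℝ y (x - x₀) : ℝ) : EReal) := by rw [hA]
  _ ≤ φ x := hsub x

lemma quad_peel {Φ : H → EReal} (hc : ConvexFunEReal Φ) (hbot : ∀ x, Φ x ≠ ⊥) {ε : ℝ}
    (hε : 0 < ε) {y xe : H}
    (hy : y ∈ SubDiff (fun x => Φ x + ((ε/2 * ‖x‖^2 : ℝ) : EReal)) xe) :
    y - ε • xe ∈ SubDiff Φ xe := by
  obtain ⟨htop, hbot', hsub⟩ := hy
  simp only at htop hbot' hsub
  have hΦtop : Φ xe ≠ ⊤ := by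
    intro h; rw [h] at htop; exact htop (by rw [EReal.top_add_coe])
  set R : ℝ := (Φ xe).toReal with hR
  have hRe : ((R : ℝ) : EReal) = Φ xe := EReal.coe_toReal hΦtop (hbot xe)
  refine ⟨hΦtop, hbot xe, fun z => ?_⟩
  rcases eq_or_ne (Φ z) ⊤ with hz | hz
  · rw [hz]; exact le_top
  set Z : ℝ := (Φ z).toReal with hZ
  have hZe : ((Z : ℝ) : EReal) = Φ z := EReal.coe_toReal hz (hbot z)
  have hreal : ∀ t : ℝ, 0 < t → t ≤ 1 →
      (inner ℝ (y - ε • xe) (z - xe) : ℝ) ≤ Z - R + t * (ε/2 * ‖z - xe‖^2) := by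
    intro t ht ht1
    have hcomb := hc xe z (1 - t) t (by linarith) ht.le (by ring)
    have hpt : (1 - t) • xe + t • z = xe + t • (z - xe) := by
      rw [smul_sub]; module
    rw [hpt] at hcomb
    have hcomb' : Φ (xe + t • (z - xe)) ≤ (((1 - t) * R + t * Z : ℝ) : EReal) := by
      refine le_trans hcomb (le_of_eq ?_)
      rw [← hRe, ← hZe, ← EReal.coe_mul, ← EReal.coe_mul, ← EReal.coe_add]
    have hs := hsub (xe + t • (z - xe))
    have hs2 : ((R + ε/2 * ‖xe‖^2 + (inner ℝ y (xe + t • (z - xe) - xe) : ℝ) : ℝ) : EReal)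
        ≤ (((1 - t) * R + t * Z + ε/2 * ‖xe + t • (z - xe)‖^2 : ℝ) : EReal) := by
      calc ((R + ε/2 * ‖xe‖^2 + (inner ℝ y (xe + t • (z - xe) - xe) : ℝ) : ℝ) : EReal)
          = (Φ xe + ((ε/2 * ‖xe‖^2 : ℝ) : EReal))
            + (((inner ℝ y (xe + t • (z - xe) - xe) : ℝ) : ℝ) : EReal) := by
            rw [← hRe, ← EReal.coe_add, ← EReal.coe_add]
      _ ≤ Φ (xe + t • (z - xe)) + ((ε/2 * ‖xe + t • (z - xe)‖^2 : ℝ) : EReal) := hs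
      _ ≤ (((1 - t) * R + t * Z : ℝ) : EReal) + ((ε/2 * ‖xe + t • (z - xe)‖^2 : ℝ) : EReal) :=
            add_le_add_left hcomb' _
      _ = _ := by rw [← EReal.coe_add]
    have hs3 := EReal.coe_le_coe_iff.1 hs2
    have hxid : xe + t • (z - xe) - xe = t • (z - xe) := by module
    rw [hxid, real_inner_smul_right] at hs3
    have hnorm : ‖xe + t • (z - xe)‖^2
        = ‖xe‖^2 + 2 * t * (inner ℝ xe (z - xe) : ℝ) + t^2 * ‖z - xe‖^2 := by
      rw [@norm_add_sq_real, real_inner_smul_right, norm_smul, Real.norm_eq_abs,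
        abs_of_nonneg ht.le]
      ring
    rw [hnorm] at hs3
    have hinner : (inner ℝ (y - ε • xe) (z - xe) : ℝ)
        = (inner ℝ y (z - xe) : ℝ) - ε * (inner ℝ xe (z - xe) : ℝ) := by
      rw [inner_sub_left, real_inner_smul_left]
    rw [hinner]
    nlinarith [hs3, ht, mul_pos ht ht]
  have hfin : (inner ℝ (y - ε • xe) (z - xe) : ℝ) ≤ Z - R :=
    le_of_forall_pos_le_add' (by positivity) hreal
  rw [← hRe, ← hZe, ← EReal.coe_add, EReal.coe_le_coe_iff]
  linarith

set_option maxHeartbeats 1000000 in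
lemma mino_mem_closure [CompleteSpace H] {Φ : H → EReal}
    (hbot : ∀ x, Φ x ≠ ⊥) (hc : ConvexFunEReal Φ) (hl : LowerSemicontinuous Φ)
    (x₀ : H) (hx₀ : Φ x₀ ≠ ⊤) (y : H) (C : ℝ)
    (hmino : ∀ x : H, (((inner ℝ y x : ℝ) - C : ℝ) : EReal) ≤ Φ x) :
    y ∈ closure (SubDiffRange Φ) := by
  rw [Metric.mem_closure_iff]
  intro δ hδ
  set S₀ : ℝ := (Φ x₀).toReal with hS₀
  have hS₀e : ((S₀ : ℝ) : EReal) = Φ x₀ := EReal.coe_toReal hx₀ (hbot x₀)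
  set K : ℝ := |S₀| + ‖x₀‖^2/2 + |C| + |(inner ℝ y x₀ : ℝ)| + 1 with hK
  have hKpos : 0 < K := by positivity
  set ε : ℝ := min 1 (δ^2/(4*K)) with hε
  have hεpos : 0 < ε := lt_min one_pos (by positivity)
  have hε1 : ε ≤ 1 := min_le_left _ _
  have hε2 : ε ≤ δ^2/(4*K) := min_le_right _ _
  set Φε : H → EReal := fun x => Φ x + ((ε/2 * ‖x‖^2 : ℝ) : EReal) with hΦε
  have hεbot : ∀ x, Φε x ≠ ⊥ := fun x h =>
    (EReal.add_eq_bot_iff.1 h).elim (hbot x) (EReal.coe_ne_bot _)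
  have hεconv : ConvexFunEReal Φε := by
    intro x z a b ha hb hab
    have hq := quad_combo x z a b ha hb hab
    calc Φε (a • x + b • z)
        ≤ ((a : EReal) * Φ x + (b : EReal) * Φ z)
          + ((ε/2 * (a * ‖x‖^2 + b * ‖z‖^2) : ℝ) : EReal) := by
          refine add_le_add (hc x z a b ha hb hab) (EReal.coe_le_coe_iff.2 ?_)
          nlinarith [hq]
    _ = ((a : EReal) * Φ x + ((a * (ε/2 * ‖x‖^2) : ℝ) : EReal))
          + ((b : EReal) * Φ z + ((b * (ε/2 * ‖z‖^2) : ℝ) : EReal)) := by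
          rw [show (ε/2 * (a * ‖x‖^2 + b * ‖z‖^2) : ℝ)
            = a * (ε/2 * ‖x‖^2) + b * (ε/2 * ‖z‖^2) by ring, EReal.coe_add]
          abel
    _ = (a : EReal) * Φε x + (b : EReal) * Φε z := by
          rw [hΦε]
          simp only
          rw [ereal_mul_add_coe ha (hbot x), ereal_mul_add_coe hb (hbot z)]
  have hεlsc : LowerSemicontinuous Φε := by
    apply lsc_add_ereal hl _ hbot (fun x => EReal.coe_ne_bot _)
    exact (continuous_coe_real_ereal.comp (by continuity)).lowerSemicontinuous
  have hεx₀ : Φε x₀ ≠ ⊤ := (EReal.add_lt_top hx₀ (EReal.coe_ne_top _)).ne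
  have hball : ∀ p ∈ Metric.ball y 1, ∀ x : H,
      (((inner ℝ p x : ℝ) - (C + 1/(2*ε)) : ℝ) : EReal) ≤ Φε x := by
    intro p hp x
    have hpu : ‖p - y‖ < 1 := by rwa [← dist_eq_norm, ← Metric.mem_ball]
    have h1 : (inner ℝ (p - y) x : ℝ) ≤ ‖p - y‖ * ‖x‖ := real_inner_le_norm _ _
    have h2 : ‖p - y‖ * ‖x‖ ≤ 1 * ‖x‖ := mul_le_mul_of_nonneg_right hpu.le (norm_nonneg x)
    have h3 : ‖x‖ ≤ ε/2 * ‖x‖^2 + 1/(2*ε) := by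
      have h0 : ε * (1/(2*ε)) = 1/2 := by field_simp
      nlinarith [sq_nonneg (ε * ‖x‖ - 1), hεpos, h0]
    have h4 : (inner ℝ p x : ℝ) - (C + 1/(2*ε))
        ≤ ((inner ℝ y x : ℝ) - C) + ε/2 * ‖x‖^2 := by
      have h5 : (inner ℝ (p - y) x : ℝ) = (inner ℝ p x : ℝ) - (inner ℝ y x : ℝ) := inner_sub_left p y x
      linarith
    calc (((inner ℝ p x : ℝ) - (C + 1/(2*ε)) : ℝ) : EReal)
        ≤ ((((inner ℝ y x : ℝ) - C) + ε/2 * ‖x‖^2 : ℝ) : EReal) := EReal.coe_le_coe_iff.2 h4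
    _ = (((inner ℝ y x : ℝ) - C : ℝ) : EReal) + ((ε/2 * ‖x‖^2 : ℝ) : EReal) := EReal.coe_add _ _
    _ ≤ Φ x + ((ε/2 * ‖x‖^2 : ℝ) : EReal) := add_le_add_left (hmino x) _
  obtain ⟨xe, hxe⟩ := core_exists_subgrad hεbot hεconv hεlsc x₀ hεx₀ y 1 (C + 1/(2*ε))
    one_pos hball
  have hv : y - ε • xe ∈ SubDiff Φ xe := quad_peel hc hbot hεpos hxe
  obtain ⟨hTOP, hBOT, hsub⟩ := hxe
  have hΦxetop : Φ xe ≠ ⊤ := by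
    intro h
    apply hTOP
    have heq : Φε xe = Φ xe + ((ε/2 * ‖xe‖^2 : ℝ) : EReal) := by rw [hΦε]
    rw [heq, h, EReal.top_add_coe]
  set R : ℝ := (Φ xe).toReal with hRdef
  have hRe : ((R : ℝ) : EReal) = Φ xe := EReal.coe_toReal hΦxetop (hbot xe)
  have hs := hsub x₀
  simp only [hΦε] at hs
  have hsr : R + ε/2 * ‖xe‖^2 + ((inner ℝ y (x₀ - xe) : ℝ)) ≤ S₀ + ε/2 * ‖x₀‖^2 := by
    rw [show Φ xe + ((ε/2 * ‖xe‖^2 : ℝ) : EReal) + (((inner ℝ y (x₀ - xe) : ℝ) : ℝ) : EReal)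
        = ((R + ε/2 * ‖xe‖^2 + ((inner ℝ y (x₀ - xe) : ℝ)) : ℝ) : EReal) by
        rw [← hRe, ← EReal.coe_add, ← EReal.coe_add],
      show Φ x₀ + ((ε/2 * ‖x₀‖^2 : ℝ) : EReal) = ((S₀ + ε/2 * ‖x₀‖^2 : ℝ) : EReal) by
        rw [← hS₀e, ← EReal.coe_add]] at hs
    exact EReal.coe_le_coe_iff.1 hs
  have hm : (inner ℝ y xe : ℝ) - C ≤ R := by
    have := hmino xe
    rw [← hRe] at this
    exact EReal.coe_le_coe_iff.1 this
  clear_value S₀ K ε Φε R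
  have hbound : ε/2 * ‖xe‖^2 ≤ K - 1 := by
    have e1 : (inner ℝ y (x₀ - xe) : ℝ) = (inner ℝ y x₀ : ℝ) - (inner ℝ y xe : ℝ) :=
      inner_sub_right y x₀ xe
    have e2 : S₀ ≤ |S₀| := le_abs_self _
    have e3 : C ≤ |C| := le_abs_self _
    have e4 : -(inner ℝ y x₀ : ℝ) ≤ |(inner ℝ y x₀ : ℝ)| := neg_le_abs _
    have e5 : ε/2 * ‖x₀‖^2 ≤ ‖x₀‖^2/2 := by nlinarith [sq_nonneg ‖x₀‖]
    rw [hK]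
    linarith
  have hdist : dist y (y - ε • xe) < δ := by
    rw [dist_eq_norm, show y - (y - ε • xe) = ε • xe by abel, norm_smul, Real.norm_eq_abs,
      abs_of_nonneg hεpos.le]
    have hn2 : (ε * ‖xe‖)^2 ≤ 2 * K * ε := by
      have : ε * (ε/2 * ‖xe‖^2) ≤ ε * (K - 1) := mul_le_mul_of_nonneg_left hbound hεpos.le
      nlinarith [hεpos]
    have hlt : 2 * K * ε < δ^2 := by
      have : 2 * K * ε ≤ 2 * K * (δ^2/(4*K)) := mul_le_mul_of_nonneg_left hε2 (by positivity)
      have h6 : 2 * K * (δ^2/(4*K)) = δ^2/2 := by field_simp; ring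
      nlinarith
    nlinarith [mul_nonneg hεpos.le (norm_nonneg xe), hδ]
  exact ⟨y - ε • xe, ⟨xe, hv⟩, hdist⟩

set_option maxHeartbeats 1000000 in
lemma interior_mino_subdiff [CompleteSpace H] {Φ : H → EReal}
    (hbot : ∀ x, Φ x ≠ ⊥) (hc : ConvexFunEReal Φ) (hl : LowerSemicontinuous Φ)
    (x₀ : H) (hx₀ : Φ x₀ ≠ ⊤) {y : H}
    (hy : y ∈ interior {p : H | ∃ C : ℝ, ∀ x : H, (((inner ℝ p x : ℝ) - C : ℝ) : EReal) ≤ Φ x}) :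
    y ∈ SubDiffRange Φ := by
  obtain ⟨δ, hδpos, hδsub⟩ := Metric.isOpen_iff.1 isOpen_interior y hy
  have hδset : ∀ p ∈ Metric.ball y δ,
      ∃ C : ℝ, ∀ x : H, (((inner ℝ p x : ℝ) - C : ℝ) : EReal) ≤ Φ x := by
    intro p hp
    have h : p ∈ {p : H | ∃ C : ℝ, ∀ x : H, (((inner ℝ p x : ℝ) - C : ℝ) : EReal) ≤ Φ x} :=
      interior_subset (hδsub hp)
    exact h
  set B : Set H := Metric.closedBall y (δ/2) with hB
  have hBclosed : IsClosed B := Metric.isClosed_closedBall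
  haveI : Nonempty B := ⟨⟨y, Metric.mem_closedBall_self (by positivity)⟩⟩
  haveI : CompleteSpace B := hBclosed.completeSpace_coe
  set F : ℕ → Set H := fun n => {p | ∀ x : H, (((inner ℝ p x : ℝ) - (n : ℝ) : ℝ) : EReal) ≤ Φ x}
    with hF
  have hFclosed : ∀ n, IsClosed (F n) := by
    intro n
    have : F n = ⋂ x : H, (fun p : H => (inner ℝ p x : ℝ) - (n : ℝ)) ⁻¹' {r : ℝ | (r : EReal) ≤ Φ x} := by
      ext p; simp [hF, Set.mem_iInter]
    rw [this]
    refine isClosed_iInter fun x => (isClosed_coe_le (Φ x)).preimage ?_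
    exact (continuous_id.inner continuous_const).sub continuous_const
  have hcover : ∀ p : B, ∃ n : ℕ, (p : H) ∈ F n := by
    rintro ⟨p, hp⟩
    have hpball : p ∈ Metric.ball y δ := by
      have := Metric.mem_closedBall.1 hp
      rw [Metric.mem_ball]; linarith
    obtain ⟨C, hC⟩ := hδset p hpball
    refine ⟨⌈max C 0⌉₊, fun x => le_trans (EReal.coe_le_coe_iff.2 ?_) (hC x)⟩
    have h1 : C ≤ (⌈max C 0⌉₊ : ℝ) := le_trans (le_max_left _ _) (Nat.le_ceil _)
    linarith
  have hunion : (⋃ n, (Subtype.val ⁻¹' F n : Set B)) = Set.univ := by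
    ext p
    simp only [Set.mem_iUnion, Set.mem_preimage, Set.mem_univ, iff_true]
    exact hcover p
  obtain ⟨n, hn⟩ := nonempty_interior_of_iUnion_of_closed
    (fun n => (hFclosed n).preimage continuous_subtype_val) hunion
  obtain ⟨⟨p₀, hp₀B⟩, hp₀⟩ := hn
  obtain ⟨r, hrpos, hrball⟩ := Metric.isOpen_iff.1 isOpen_interior _ hp₀
  have hball_sub : ∀ q : H, q ∈ B → dist q p₀ < r → q ∈ F n := by
    intro q hqB hqd
    have hq : (⟨q, hqB⟩ : B) ∈ Metric.ball (⟨p₀, hp₀B⟩ : B) r := by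
      rw [Metric.mem_ball, Subtype.dist_eq]; exact hqd
    have h2 : (⟨q, hqB⟩ : B) ∈ (Subtype.val ⁻¹' F n : Set B) := interior_subset (hrball hq)
    exact h2
  set τ : ℝ := min 1 (r/δ) with hτ
  have hτpos : 0 < τ := lt_min one_pos (by positivity)
  have hτ1 : τ ≤ 1 := min_le_left _ _
  have hτδ : τ * δ ≤ r := by
    have h1 : τ ≤ r/δ := min_le_right _ _
    rw [← div_mul_cancel₀ r hδpos.ne']
    exact mul_le_mul_of_nonneg_right h1 hδpos.le
  set c : H := p₀ + τ • (y - p₀) with hcdef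
  have hp₀y : ‖p₀ - y‖ ≤ δ/2 := by
    have := Metric.mem_closedBall.1 hp₀B
    rwa [dist_eq_norm] at this
  have hcy : ‖c - y‖ ≤ (1 - τ) * (δ/2) := by
    have h1 : c - y = (1 - τ) • (p₀ - y) := by rw [hcdef]; module
    rw [h1, norm_smul, Real.norm_eq_abs, abs_of_nonneg (by linarith)]
    exact mul_le_mul_of_nonneg_left hp₀y (by linarith)
  have hcp₀ : ‖c - p₀‖ ≤ τ * (δ/2) := by
    have h1 : c - p₀ = τ • (y - p₀) := by rw [hcdef]; module
    rw [h1, norm_smul, Real.norm_eq_abs, abs_of_nonneg hτpos.le, norm_sub_rev]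
    exact mul_le_mul_of_nonneg_left hp₀y hτpos.le
  set ρ₁ : ℝ := τ * δ / 4 with hρ₁
  have hρ₁pos : 0 < ρ₁ := by rw [hρ₁]; positivity
  have hFn_ball : ∀ u : H, dist u c < ρ₁ → u ∈ F n := by
    intro u hu
    rw [dist_eq_norm] at hu
    have huB : u ∈ B := by
      rw [hB, Metric.mem_closedBall, dist_eq_norm]
      calc ‖u - y‖ ≤ ‖u - c‖ + ‖c - y‖ := norm_sub_le_norm_sub_add_norm_sub u c y
      _ ≤ ρ₁ + (1 - τ) * (δ/2) := add_le_add hu.le hcy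
      _ ≤ δ/2 := by rw [hρ₁]; nlinarith [hτpos, hδpos]
    have hup₀ : dist u p₀ < r := by
      rw [dist_eq_norm]
      calc ‖u - p₀‖ ≤ ‖u - c‖ + ‖c - p₀‖ := norm_sub_le_norm_sub_add_norm_sub u c p₀
      _ < ρ₁ + τ * (δ/2) := add_lt_add_of_lt_of_le hu hcp₀
      _ ≤ r := by rw [hρ₁]; nlinarith [hτpos, hδpos]
    exact hball_sub u huB hup₀
  set w : H := (2:ℝ) • y - c with hwdef
  have hwball : w ∈ Metric.ball y δ := by
    rw [Metric.mem_ball, dist_eq_norm]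
    have h1 : w - y = -(c - y) := by rw [hwdef]; module
    rw [h1, norm_neg]
    have : (1 - τ) * (δ/2) < δ := by nlinarith [hτpos, hδpos]
    linarith [hcy]
  obtain ⟨Cw, hCw⟩ := hδset w hwball
  have hcore : ∀ q ∈ Metric.ball y (ρ₁/2), ∀ x : H,
      (((inner ℝ q x : ℝ) - (((n : ℝ) + Cw)/2) : ℝ) : EReal) ≤ Φ x := by
    intro q hq x
    set u : H := (2:ℝ) • q - w with hudef
    have hu : dist u c < ρ₁ := by
      rw [dist_eq_norm]
      have h1 : u - c = (2:ℝ) • (q - y) := by rw [hudef, hwdef]; module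
      rw [h1, norm_smul, Real.norm_eq_abs]
      have h2 : ‖q - y‖ < ρ₁/2 := by
        rw [← dist_eq_norm, ← Metric.mem_ball]; exact hq
      rw [abs_of_nonneg (by norm_num : (0:ℝ) ≤ 2)]
      linarith
    have hFu := hFn_ball u hu x
    have hcombo := ereal_combo_le hFu (hCw x) (by norm_num : (0:ℝ) ≤ 1/2)
      (by norm_num : (0:ℝ) ≤ 1/2) (by norm_num)
    refine le_trans (le_of_eq (congrArg _ ?_)) hcombo
    have hsum : (inner ℝ u x : ℝ) + (inner ℝ w x : ℝ) = 2 * (inner ℝ q x : ℝ) := by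
      rw [← inner_add_left, show u + w = (2:ℝ) • q by rw [hudef]; module,
        real_inner_smul_left]
    linarith
  obtain ⟨xb, hxb⟩ := core_exists_subgrad hbot hc hl x₀ hx₀ y (ρ₁/2) (((n : ℝ) + Cw)/2)
    (by positivity) hcore
  exact ⟨xb, hxb⟩

end Main

theorem brezis_haraux_almost_equal
    {H : Type*} [NormedAddCommGroup H] [InnerProductSpace ℝ H] [CompleteSpace H]
    (φ₁ φ₂ : H → EReal)
    (h₁p : ProperFun φ₁) (h₂p : ProperFun φ₂)
    (h₁c : ConvexFunEReal φ₁) (h₂c : ConvexFunEReal φ₂)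
    (h₁l : LowerSemicontinuous φ₁) (h₂l : LowerSemicontinuous φ₂)
    (hdom : ∃ x : H, φ₁ x ≠ ⊤ ∧ φ₁ x ≠ ⊥ ∧ φ₂ x ≠ ⊤ ∧ φ₂ x ≠ ⊥)
    (hsum : ∀ x : H, SubDiff (fun z => φ₁ z + φ₂ z) x
        = {y : H | ∃ y₁ ∈ SubDiff φ₁ x, ∃ y₂ ∈ SubDiff φ₂ x, y = y₁ + y₂}) :
    closure (SubDiffRange (fun x => φ₁ x + φ₂ x))
        = closure (SubDiffRange φ₁ + SubDiffRange φ₂) ∧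
    interior (SubDiffRange (fun x => φ₁ x + φ₂ x))
        = interior (SubDiffRange φ₁ + SubDiffRange φ₂) := by
  obtain ⟨x₀, h1t, h1b, h2t, h2b⟩ := hdom
  have hSbot : ∀ x, φ₁ x + φ₂ x ≠ ⊥ := fun x h =>
    (EReal.add_eq_bot_iff.1 h).elim (h₁p.1 x) (h₂p.1 x)
  have hStop : φ₁ x₀ + φ₂ x₀ ≠ ⊤ := (EReal.add_lt_top h1t h2t).ne
  have hSc : ConvexFunEReal (fun x => φ₁ x + φ₂ x) := convex_add_ereal h₁c h₂c h₁p.1 h₂p.1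
  have hSl : LowerSemicontinuous (fun x => φ₁ x + φ₂ x) := lsc_add_ereal h₁l h₂l h₁p.1 h₂p.1
  have hR12 : SubDiffRange φ₁ + SubDiffRange φ₂
      ⊆ {p : H | ∃ C : ℝ, ∀ x : H, (((inner ℝ p x : ℝ) - C : ℝ) : EReal) ≤ φ₁ x + φ₂ x} := by
    rintro z hz
    rw [Set.mem_add] at hz
    obtain ⟨y₁, hy₁, y₂, hy₂, rfl⟩ := hz
    obtain ⟨C₁, hC₁⟩ := subdiffrange_mino hy₁
    obtain ⟨C₂, hC₂⟩ := subdiffrange_mino hy₂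
    refine ⟨C₁ + C₂, fun x => ?_⟩
    calc (((inner ℝ (y₁ + y₂) x : ℝ) - (C₁ + C₂) : ℝ) : EReal)
        = (((inner ℝ y₁ x : ℝ) - C₁ : ℝ) : EReal) + (((inner ℝ y₂ x : ℝ) - C₂ : ℝ) : EReal) := by
          rw [← EReal.coe_add]
          congr 1
          rw [inner_add_left]
          ring
    _ ≤ φ₁ x + φ₂ x := add_le_add (hC₁ x) (hC₂ x)
  have hRS : SubDiffRange (fun x => φ₁ x + φ₂ x) ⊆ SubDiffRange φ₁ + SubDiffRange φ₂ := by
    rintro z ⟨x, hx⟩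
    rw [hsum x] at hx
    obtain ⟨y₁, hy₁, y₂, hy₂, rfl⟩ := hx
    rw [Set.mem_add]
    exact ⟨y₁, ⟨x, hy₁⟩, y₂, ⟨x, hy₂⟩, rfl⟩
  have hMcl : {p : H | ∃ C : ℝ, ∀ x : H, (((inner ℝ p x : ℝ) - C : ℝ) : EReal) ≤ φ₁ x + φ₂ x}
      ⊆ closure (SubDiffRange (fun x => φ₁ x + φ₂ x)) := by
    rintro p ⟨C, hC⟩
    exact mino_mem_closure hSbot hSc hSl x₀ hStop p C hC
  constructor
  · refine Set.Subset.antisymm (closure_mono hRS) ?_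
    exact closure_minimal (hR12.trans hMcl) isClosed_closure
  · refine Set.Subset.antisymm (interior_mono hRS) ?_
    refine interior_maximal (fun w hw => ?_) isOpen_interior
    exact interior_mino_subdiff hSbot hSc hSl x₀ hStop (interior_mono hR12 hw)
end

section
/- Let α : ℝ → ℝ be continuous, monotone nondecreasing with α(0) = 0, let L(t) = ∫₀ᵗ α(s) ds and Λ(t) = max(L(t), L(−t)). Then: (i) L(t) ≤ t·α(t) for all t ∈ ℝ; and (ii) if there exist t₀ > 0 and C > 0 such that Λ(2t) ≤ C·Λ(t) for all t ≥ t₀ (the Δ₂-condition near infinity), then there exist t₁ > 0 and k ∈ (0, 1] such that k·t·α(t) ≤ Λ(t) for all t ∈ ℝ with |t| ≥ t₁. -/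
private lemma int_lb (α : ℝ → ℝ) (hcont : Continuous α) (hmono : Monotone α)
    {a b : ℝ} (hab : a ≤ b) : (b - a) * α a ≤ ∫ s in a..b, α s := by
  have h := intervalIntegral.integral_mono_on hab
    (intervalIntegrable_const : IntervalIntegrable (fun _ => α a) MeasureTheory.volume a b) (hcont.intervalIntegrable a b)
    (fun s hs => hmono hs.1)
  simpa [smul_eq_mul] using h

private lemma int_ub (α : ℝ → ℝ) (hcont : Continuous α) (hmono : Monotone α)
    {a b : ℝ} (hab : a ≤ b) : (∫ s in a..b, α s) ≤ (b - a) * α b := by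
  have h := intervalIntegral.integral_mono_on hab
    (hcont.intervalIntegrable a b) (intervalIntegrable_const : IntervalIntegrable (fun _ => α b) MeasureTheory.volume a b)
    (fun s hs => hmono hs.2)
  simpa [smul_eq_mul] using h

theorem delta2_comparison
    (α : ℝ → ℝ) (hcont : Continuous α) (hmono : Monotone α) (h0 : α 0 = 0)
    (L Λ : ℝ → ℝ)
    (hL : ∀ t : ℝ, L t = ∫ s in (0:ℝ)..t, α s)
    (hΛ : ∀ t : ℝ, Λ t = max (L t) (L (-t))) :
    -- (i)
    (∀ t : ℝ, L t ≤ t * α t) ∧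
    -- (ii)
    ((∃ t₀ > (0:ℝ), ∃ C > (0:ℝ), ∀ t ≥ t₀, Λ (2 * t) ≤ C * Λ t) →
      ∃ t₁ > (0:ℝ), ∃ k : ℝ, 0 < k ∧ k ≤ 1 ∧
        ∀ t : ℝ, t₁ ≤ |t| → k * (t * α t) ≤ Λ t) := by
  constructor
  · intro t
    rcases le_or_gt 0 t with ht | ht
    · have := int_ub α hcont hmono ht
      rw [hL t]; linarith
    · have h1 : (0 - t) * α t ≤ ∫ s in t..(0:ℝ), α s :=
        int_lb α hcont hmono ht.le
      have h2 : (∫ s in (0:ℝ)..t, α s) = -∫ s in t..(0:ℝ), α s :=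
        intervalIntegral.integral_symm (f := α) (μ := MeasureTheory.volume) t 0
      rw [hL t, h2]; linarith
  · rintro ⟨t₀, ht₀, C, hC, hΔ⟩
    set M := max C 1 with hM
    have hM1 : (1:ℝ) ≤ M := le_max_right _ _
    have hMpos : (0:ℝ) < M := lt_of_lt_of_le one_pos hM1
    refine ⟨t₀, ht₀, M⁻¹, inv_pos.mpr hMpos, inv_le_one_of_one_le₀ hM1, ?_⟩
    intro t ht
    obtain ⟨u, hu⟩ : ∃ u : ℝ, u = |t| := ⟨|t|, rfl⟩
    rw [← hu] at ht
    have hupos : 0 < u := lt_of_lt_of_le ht₀ ht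
    have hu0 : (0:ℝ) ≤ u := hupos.le
    -- key: t * α t ≤ Λ (2 * u)
    have key : t * α t ≤ Λ (2 * u) := by
      rcases le_or_gt 0 t with htpos | htneg
      · have hut : u = t := by rw [hu, abs_of_nonneg htpos]
        subst hut
        -- L(2u) ≥ u * α u
        have h1 : (u - 0) * α 0 ≤ ∫ s in (0:ℝ)..u, α s := int_lb α hcont hmono hu0
        have h2 : (2*u - u) * α u ≤ ∫ s in u..(2*u), α s :=
          int_lb α hcont hmono (by linarith)
        have hadd : (∫ s in (0:ℝ)..u, α s) + (∫ s in u..(2*u), α s)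
            = ∫ s in (0:ℝ)..(2*u), α s :=
          intervalIntegral.integral_add_adjacent_intervals
            (hcont.intervalIntegrable _ _) (hcont.intervalIntegrable _ _)
        have hLle : u * α u ≤ L (2*u) := by
          rw [hL]; rw [← hadd]; rw [h0] at h1; nlinarith
        calc u * α u ≤ L (2*u) := hLle
          _ ≤ Λ (2*u) := by rw [hΛ]; exact le_max_left _ _
      · have hut : u = -t := by rw [hu, abs_of_neg htneg]
        -- L(-2u) ≥ t * α t = -u * α(-u)
        have h1 : (∫ s in (-u)..(0:ℝ), α s) ≤ (0 - (-u)) * α 0 :=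
          int_ub α hcont hmono (by linarith)
        have h2 : (∫ s in (-(2*u))..(-u), α s) ≤ (-u - (-(2*u))) * α (-u) :=
          int_ub α hcont hmono (by linarith)
        have hadd : (∫ s in (-(2*u))..(-u), α s) + (∫ s in (-u)..(0:ℝ), α s)
            = ∫ s in (-(2*u))..(0:ℝ), α s :=
          intervalIntegral.integral_add_adjacent_intervals
            (hcont.intervalIntegrable _ _) (hcont.intervalIntegrable _ _)
        have hsym : (∫ s in (0:ℝ)..(-(2*u)), α s) = -∫ s in (-(2*u))..(0:ℝ), α s :=
          intervalIntegral.integral_symm (f := α) (μ := MeasureTheory.volume) (-(2*u)) 0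
        have hLge : t * α t ≤ L (-(2*u)) := by
          rw [hL, hsym, ← hadd]; rw [h0] at h1
          have hta : t * α t = -(u * α (-u)) := by
            have : t = -u := by rw [hut]; ring
            rw [this]; ring
          nlinarith
        calc t * α t ≤ L (-(2*u)) := hLge
          _ ≤ Λ (2*u) := by rw [hΛ]; exact le_max_right _ _
    -- Λ(2u) ≤ C * Λ u and Λ u = Λ t
    have hΛut : Λ u = Λ t := by
      rcases le_or_gt 0 t with htpos | htneg
      · rw [hu, abs_of_nonneg htpos]
      · rw [hu, abs_of_neg htneg, hΛ, hΛ, neg_neg, max_comm]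
    have hΛt0 : 0 ≤ Λ t := by
      have : 0 ≤ L u := by
        have h1 : (u - 0) * α 0 ≤ ∫ s in (0:ℝ)..u, α s := int_lb α hcont hmono hu0
        rw [hL]; rw [h0] at h1; linarith
      rw [← hΛut, hΛ]
      exact le_trans this (le_max_left _ _)
    have hfin : t * α t ≤ M * Λ t := by
      have h3 : Λ (2*u) ≤ C * Λ u := hΔ u ht
      have h4 : C * Λ u ≤ M * Λ t := by
        rw [hΛut]; exact mul_le_mul_of_nonneg_right (le_max_left _ _) hΛt0
      linarith
    calc M⁻¹ * (t * α t) ≤ M⁻¹ * (M * Λ t) :=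
          mul_le_mul_of_nonneg_left hfin (inv_pos.mpr hMpos).le
      _ = Λ t := by field_simp
end

section
/- Let q ∈ ℝ with 0 < q < 2 + tan(1/2), set c = 2 + tan(1/2) − q, and define z : ℝ × ℝ → ℝ by z(x, y) = cos(x − 1/2)·cos(y − 1/2). Then: c > 0; Δz(x, y) + 2·z(x, y) = 0 for all (x, y) (where Δz = ∂²z/∂x² + ∂²z/∂y²); z(x, y) > 0 for all (x, y) ∈ [0, 1] × [0, 1]; and z satisfies the four Wentzell boundary conditions on the unit square: for all x ∈ [0, 1], −2z(x,0) − ∂_y z(x,0) + c·z(x,0) − q·∂²_{yy} z(x,0) = 0 and −2z(x,1) + ∂_y z(x,1) + c·z(x,1) − q·∂²_{yy} z(x,1) = 0, and for all y ∈ [0, 1], −2z(1,y) + ∂_x z(1,y) + c·z(1,y) − q·∂²_{xx} z(1,y) = 0 and −2z(0,y) − ∂_x z(0,y) + c·z(0,y) − q·∂²_{xx} z(0,y) = 0. -/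
open Real

private lemma hasD (k t : ℝ) :
    HasDerivAt (fun s => Real.cos (s - 1/2) * k) (-Real.sin (t - 1/2) * k) t := by
  have h := (Real.hasDerivAt_cos (t - 1/2)).comp t ((hasDerivAt_id t).sub_const (1/2))
  simpa using h.mul_const k

private lemma hasD2 (k t : ℝ) :
    HasDerivAt (fun s => -Real.sin (s - 1/2) * k) (-Real.cos (t - 1/2) * k) t := by
  have h := ((Real.hasDerivAt_sin (t - 1/2)).comp t ((hasDerivAt_id t).sub_const (1/2))).neg
  have h2 := h.mul_const k
  simpa [neg_mul] using h2

private lemma derivD (k : ℝ) :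
    deriv (fun s => Real.cos (s - 1/2) * k) = fun t => -Real.sin (t - 1/2) * k :=
  funext fun t => (hasD k t).deriv

private lemma derivS (k : ℝ) :
    deriv (fun s => -Real.sin (s - 1/2) * k) = fun t => -Real.cos (t - 1/2) * k :=
  funext fun t => (hasD2 k t).deriv

private lemma derivD2 (k t : ℝ) :
    deriv (deriv (fun s => Real.cos (s - 1/2) * k)) t = -Real.cos (t - 1/2) * k := by
  rw [derivD]
  exact (hasD2 k t).deriv

private lemma cos_pos_of_Icc {x : ℝ} (hx : x ∈ Set.Icc (0:ℝ) 1) : 0 < Real.cos (x - 1/2) := by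
  apply Real.cos_pos_of_mem_Ioo
  constructor
  · have := hx.1
    nlinarith [Real.pi_gt_three]
  · have := hx.2
    nlinarith [Real.pi_gt_three]

theorem ground_state_2d_square
    (q : ℝ) (hq0 : 0 < q) (hq1 : q < 2 + tan (1/2))
    (c : ℝ) (hc : c = 2 + tan (1/2) - q)
    (z : ℝ → ℝ → ℝ) (hz : ∀ x y : ℝ, z x y = cos (x - 1/2) * cos (y - 1/2)) :
    -- the constant c is positive
    0 < c ∧
    -- Δz + 2z = 0 on the plane
    (∀ x y : ℝ, deriv (deriv (fun t => z t y)) x + deriv (deriv (z x)) y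
        + 2 * z x y = 0) ∧
    -- positivity on the closed unit square
    (∀ x ∈ Set.Icc (0:ℝ) 1, ∀ y ∈ Set.Icc (0:ℝ) 1, 0 < z x y) ∧
    -- boundary condition on Γ₁ = {(x,0)}
    (∀ x ∈ Set.Icc (0:ℝ) 1,
      -2 * z x 0 - deriv (z x) 0 + c * z x 0 - q * deriv (deriv (z x)) 0 = 0) ∧
    -- boundary condition on Γ₃ = {(x,1)}
    (∀ x ∈ Set.Icc (0:ℝ) 1,
      -2 * z x 1 + deriv (z x) 1 + c * z x 1 - q * deriv (deriv (z x)) 1 = 0) ∧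
    -- boundary condition on Γ₂ = {(1,y)}
    (∀ y ∈ Set.Icc (0:ℝ) 1,
      -2 * z 1 y + deriv (fun t => z t y) 1 + c * z 1 y
        - q * deriv (deriv (fun t => z t y)) 1 = 0) ∧
    -- boundary condition on Γ₄ = {(0,y)}
    (∀ y ∈ Set.Icc (0:ℝ) 1,
      -2 * z 0 y - deriv (fun t => z t y) 0 + c * z 0 y
        - q * deriv (deriv (fun t => z t y)) 0 = 0) := by
  have hzy : ∀ x : ℝ, z x = fun y => Real.cos (y - 1/2) * Real.cos (x - 1/2) := by
    intro x; funext y; rw [hz, mul_comm]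
  have hzx : ∀ y : ℝ, (fun t => z t y) = fun t => Real.cos (t - 1/2) * Real.cos (y - 1/2) := by
    intro y; funext t; rw [hz]
  have hcpos : 0 < Real.cos (1/2 : ℝ) := by
    apply Real.cos_pos_of_mem_Ioo
    constructor <;> nlinarith [Real.pi_gt_three]
  have htan : Real.tan (1/2) * Real.cos (1/2) = Real.sin (1/2) := by
    rw [Real.tan_eq_sin_div_cos]; field_simp
  have hcos0 : Real.cos ((0:ℝ) - 1/2) = Real.cos (1/2) := by
    rw [show (0:ℝ) - 1/2 = -(1/2) by ring, Real.cos_neg]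
  have hsin0 : Real.sin ((0:ℝ) - 1/2) = -Real.sin (1/2) := by
    rw [show (0:ℝ) - 1/2 = -(1/2) by ring, Real.sin_neg]
  have hcos1 : Real.cos ((1:ℝ) - 1/2) = Real.cos (1/2) := by norm_num
  have hsin1 : Real.sin ((1:ℝ) - 1/2) = Real.sin (1/2) := by norm_num
  refine ⟨by linarith, ?_, ?_, ?_, ?_, ?_, ?_⟩
  · intro x y
    rw [hzx y, hzy x] at *
    simp only [derivD2]
    ring
  · intro x hx y hy
    rw [hz]
    exact mul_pos (cos_pos_of_Icc hx) (cos_pos_of_Icc hy)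
  · intro x hx
    rw [hzy x]
    simp only [derivD, derivS, hcos0, hsin0, hc]
    have := cos_pos_of_Icc hx
    nlinarith [htan]
  · intro x hx
    rw [hzy x]
    simp only [derivD, derivS, hcos1, hsin1, hc]
    have := cos_pos_of_Icc hx
    nlinarith [htan]
  · intro y hy
    rw [hzx y]
    simp only [derivD, derivS, hcos1, hsin1, hc, hz]
    have := cos_pos_of_Icc hy
    nlinarith [htan]
  · intro y hy
    rw [hzx y]
    simp only [derivD, derivS, hcos0, hsin0, hc, hz]
    have := cos_pos_of_Icc hy
    nlinarith [htan]
end
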